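/- arXiv:2001.11000 — 5 statements merged into one kernel-verified Lean document; each statement's English description precedes it below -/
import Mathlib

section
/- Let Ω ⊂ ℝ² be an open connected set, f : Ω → ℝᵐ continuous, and suppose for every x ∈ Ω either f is constant in a neighborhood of x or there is a line L through x with f constant on the connected component of x in L ∩ Ω. If Δ ⊂ Ω is a closed triangular domain (convex hull of three non-collinear points) and f is constant on two of the edges of Δ, then f is constant on all of Δ. -/
noncomputable section
open Set Metric Topology

abbrev Eu (n : ℕ) : Type := EuclideanSpace ℝ (Fin n)

/-- `L` is a (full) line in the plane passing through `x`. -/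
def IsLineThrough (L : Set (Eu 2)) (x : Eu 2) : Prop :=
  x ∈ L ∧ ∃ d : Eu 2, d ≠ 0 ∧ L = {p | ∃ t : ℝ, p = x + t • d}

lemma chordEx {Δ : Set (Eu 2)} (hconv : Convex ℝ Δ) (hcomp : IsCompact Δ)
    {y : Eu 2} (hy : y ∈ interior Δ) {d : Eu 2} (hd : d ≠ 0) :
    ∃ tm tp : ℝ, tm < 0 ∧ 0 < tp ∧ (∀ t ∈ Icc tm tp, y + t • d ∈ Δ) ∧
      y + tm • d ∉ interior Δ ∧ y + tp • d ∉ interior Δ := by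
  set γ : ℝ → Eu 2 := fun t => y + t • d with hγ
  have hγc : Continuous γ := continuous_const.add (continuous_id.smul continuous_const)
  set T : Set ℝ := γ ⁻¹' Δ with hT
  have hTcl : IsClosed T := hcomp.isClosed.preimage hγc
  obtain ⟨r, hr⟩ := hcomp.isBounded.subset_closedBall y
  have hd' : 0 < ‖d‖ := norm_pos_iff.2 hd
  have hTsub : T ⊆ Icc (-(r / ‖d‖)) (r / ‖d‖) := by
    intro t ht
    have h1 : dist (γ t) y ≤ r := hr ht
    have h2 : |t| * ‖d‖ ≤ r := by
      simpa [hγ, dist_eq_norm, norm_smul, Real.norm_eq_abs] using h1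
    have h3 : |t| ≤ r / ‖d‖ := (le_div_iff₀ hd').2 h2
    exact abs_le.1 h3
  have hTcp : IsCompact T := isCompact_Icc.of_isClosed_subset hTcl hTsub
  have hTconv : Convex ℝ T := by
    have : T = (AffineMap.lineMap y (y + d) : ℝ →ᵃ[ℝ] Eu 2) ⁻¹' Δ := by
      ext t
      simp [hT, hγ, AffineMap.lineMap_apply, add_sub_cancel_left, add_comm]
    rw [this]
    exact hconv.affine_preimage _
  have hγ0 : γ 0 ∈ interior Δ := by simpa [hγ] using hy
  have hpre : γ ⁻¹' interior Δ ∈ 𝓝 (0:ℝ) :=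
    hγc.continuousAt.preimage_mem_nhds (isOpen_interior.mem_nhds hγ0)
  obtain ⟨ε, hε, hball⟩ := Metric.mem_nhds_iff.1 hpre
  have hmem : ∀ t : ℝ, |t| < ε → t ∈ T := by
    intro t ht
    have h4 : γ t ∈ interior Δ := hball (by simpa [Real.dist_eq] using ht)
    exact (show γ t ∈ Δ from interior_subset h4)
  have hne2 : (ε/2) ∈ T := hmem _ (by rw [abs_of_pos (by linarith)]; linarith)
  have hne2' : (-(ε/2)) ∈ T := hmem _ (by rw [abs_of_neg (by linarith)]; linarith)
  have hbddB : BddBelow T := ⟨_, fun x hx => (hTsub hx).1⟩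
  have hbddA : BddAbove T := ⟨_, fun x hx => (hTsub hx).2⟩
  have hTne : T.Nonempty := ⟨_, hne2⟩
  refine ⟨sInf T, sSup T, ?_, ?_, ?_, ?_, ?_⟩
  · have := csInf_le hbddB hne2'; linarith
  · have := le_csSup hbddA hne2; linarith
  · intro t ht
    exact hTconv.ordConnected.out (hTcp.sInf_mem hTne) (hTcp.sSup_mem hTne) ht
  · intro hcon
    have : γ ⁻¹' interior Δ ∈ 𝓝 (sInf T) :=
      hγc.continuousAt.preimage_mem_nhds (isOpen_interior.mem_nhds hcon)
    obtain ⟨δ, hδ, hball'⟩ := Metric.mem_nhds_iff.1 this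
    have h5 : γ (sInf T - δ/2) ∈ interior Δ := hball' (by
      simp only [mem_ball, Real.dist_eq]
      rw [show sInf T - δ/2 - sInf T = -(δ/2) by ring, abs_neg, abs_of_pos (by linarith)]
      linarith)
    have : (sInf T - δ/2) ∈ T := show γ _ ∈ Δ from interior_subset h5
    have := csInf_le hbddB this; linarith
  · intro hcon
    have : γ ⁻¹' interior Δ ∈ 𝓝 (sSup T) :=
      hγc.continuousAt.preimage_mem_nhds (isOpen_interior.mem_nhds hcon)
    obtain ⟨δ, hδ, hball'⟩ := Metric.mem_nhds_iff.1 this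
    have h5 : γ (sSup T + δ/2) ∈ interior Δ := hball' (by
      simp only [mem_ball, Real.dist_eq]
      rw [show sSup T + δ/2 - sSup T = δ/2 by ring, abs_of_pos (by linarith)]
      linarith)
    have : (sSup T + δ/2) ∈ T := show γ _ ∈ Δ from interior_subset h5
    have := le_csSup hbddA this; linarith

set_option maxHeartbeats 1000000 in
theorem stmt_0 {m : ℕ} (Ω : Set (Eu 2)) (hΩo : IsOpen Ω) (hΩc : IsConnected Ω)
    (f : Eu 2 → Eu m) (hf : ContinuousOn f Ω)
    (ha : ∀ x ∈ Ω, (∃ U ∈ 𝓝 x, U ⊆ Ω ∧ ∀ y ∈ U, f y = f x) ∨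
      ∃ L : Set (Eu 2), IsLineThrough L x ∧
        ∀ y ∈ connectedComponentIn (L ∩ Ω) x, f y = f x)
    (a b c : Eu 2) (hind : AffineIndependent ℝ ![a, b, c])
    (hΔ : convexHull ℝ ({a, b, c} : Set (Eu 2)) ⊆ Ω)
    (hab : ∀ y ∈ segment ℝ a b, f y = f a)
    (hac : ∀ y ∈ segment ℝ a c, f y = f a) :
    ∀ y ∈ convexHull ℝ ({a, b, c} : Set (Eu 2)), f y = f a := by
  -- Setup: affine basis and barycentric coordinates
  have htop : affineSpan ℝ (range ![a,b,c]) = ⊤ := by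
    rw [hind.affineSpan_eq_top_iff_card_eq_finrank_add_one]
    simp [finrank_euclideanSpace]
  set B : AffineBasis (Fin 3) ℝ (Eu 2) := ⟨![a,b,c], hind, htop⟩ with hBdef
  set Δ : Set (Eu 2) := convexHull ℝ ({a,b,c} : Set (Eu 2)) with hΔdef
  have hrange : range ⇑B = ({a, b, c} : Set (Eu 2)) := by
    show range ![a,b,c] = _
    simp only [Matrix.range_cons, Matrix.range_empty, Set.union_empty]
    ext x; simp; tauto
  have hmemΔ : ∀ x, x ∈ Δ ↔ ∀ i, 0 ≤ B.coord i x := by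
    intro x
    rw [hΔdef, ← hrange, B.convexHull_eq_nonneg_coord]; rfl
  have hint : interior Δ = {x | ∀ i, 0 < B.coord i x} := by
    rw [hΔdef, ← hrange, B.interior_convexHull]
  have hsum : ∀ x, B.coord 0 x + B.coord 1 x + B.coord 2 x = 1 := by
    intro x
    have := B.sum_coord_apply_eq_one x
    rwa [Fin.sum_univ_three] at this
  have hrep : ∀ x : Eu 2, (B.coord 0 x) • a + (B.coord 1 x) • b + (B.coord 2 x) • c = x := by
    intro x
    have h1 := B.affineCombination_coord_eq_self x
    rw [Finset.affineCombination_eq_linear_combination _ _ _ (B.sum_coord_apply_eq_one x)] at h1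
    rw [Fin.sum_univ_three] at h1
    exact h1
  have hseg1 : ∀ x ∈ Δ, B.coord 1 x = 0 → x ∈ segment ℝ a c := by
    intro x hx h1
    exact ⟨B.coord 0 x, B.coord 2 x, (hmemΔ x).1 hx 0, (hmemΔ x).1 hx 2,
      by have := hsum x; rw [h1] at this; linarith,
      by have := hrep x; rwa [h1, zero_smul, add_zero] at this⟩
  have hseg2 : ∀ x ∈ Δ, B.coord 2 x = 0 → x ∈ segment ℝ a b := by
    intro x hx h2
    exact ⟨B.coord 0 x, B.coord 1 x, (hmemΔ x).1 hx 0, (hmemΔ x).1 hx 1,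
      by have := hsum x; rw [h2] at this; linarith,
      by have := hrep x; rwa [h2, zero_smul, add_zero] at this⟩
  -- f = f a at any point of Δ with a vanishing non-first coordinate
  have hedge : ∀ x ∈ Δ, ∀ i : Fin 3, i ≠ 0 → B.coord i x = 0 → f x = f a := by
    intro x hx i hi h0
    fin_cases i
    · exact absurd rfl hi
    · exact hac x (hseg1 x hx h0)
    · exact hab x (hseg2 x hx h0)
  -- boundary points have a vanishing coordinate
  have hbdry : ∀ x ∈ Δ, x ∉ interior Δ → ∃ i, B.coord i x = 0 := by
    intro x hx hni
    rw [hint] at hni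
    simp only [mem_setOf_eq] at hni
    push_neg at hni
    obtain ⟨i, hi⟩ := hni
    exact ⟨i, le_antisymm hi ((hmemΔ x).1 hx i)⟩
  -- affine coordinate along a line
  have hlin : ∀ (i : Fin 3) (x v : Eu 2) (t : ℝ),
      B.coord i (x + t • v) = B.coord i x + t * (B.coord i).linear v := by
    intro i x v t
    have h := (B.coord i).map_vadd x (t • v)
    rw [vadd_eq_add, vadd_eq_add] at h
    rw [add_comm x (t • v), h, map_smul, smul_eq_mul]
    ring
  have hconvΔ : Convex ℝ Δ := convex_convexHull ℝ _
  have hcompΔ : IsCompact Δ := (Set.toFinite ({a,b,c} : Set (Eu 2))).isCompact_convexHull ℝ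
  -- Key lemma: interior points where f ≠ f a are points of local constancy
  have key : ∀ y ∈ interior Δ, f y ≠ f a → ∃ U ∈ 𝓝 y, ∀ z ∈ U, f z = f y := by
    intro y hy hne
    have hyΔ : y ∈ Δ := interior_subset hy
    rcases ha y (hΔ hyΔ) with ⟨U, hU, _, hUc⟩ | ⟨L, ⟨hyL, d, hd, hLeq⟩, hLc⟩
    · exact ⟨U, hU, hUc⟩
    · exfalso
      obtain ⟨tm, tp, htm, htp, hIcc, hpm, hpp⟩ := chordEx hconvΔ hcompΔ hy hd
      set γ : ℝ → Eu 2 := fun t => y + t • d with hγ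
      have hγc : Continuous γ := continuous_const.add (continuous_id.smul continuous_const)
      -- the chord lies in the connected component
      have hsub : γ '' Icc tm tp ⊆ connectedComponentIn (L ∩ Ω) y := by
        apply IsPreconnected.subset_connectedComponentIn
        · exact (isPreconnected_Icc).image γ hγc.continuousOn
        · exact ⟨0, ⟨htm.le, htp.le⟩, by simp [hγ]⟩
        · rintro _ ⟨t, ht, rfl⟩
          exact ⟨hLeq ▸ ⟨t, rfl⟩, hΔ (hIcc t ht)⟩
      have hfp : f (γ tm) = f y := hLc _ (hsub ⟨tm, ⟨le_refl _, by linarith⟩, rfl⟩)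
      have hfq : f (γ tp) = f y := hLc _ (hsub ⟨tp, ⟨by linarith, le_refl _⟩, rfl⟩)
      have hpΔ : γ tm ∈ Δ := hIcc tm ⟨le_refl _, by linarith⟩
      have hqΔ : γ tp ∈ Δ := hIcc tp ⟨by linarith, le_refl _⟩
      obtain ⟨ip, hip⟩ := hbdry _ hpΔ hpm
      obtain ⟨iq, hiq⟩ := hbdry _ hqΔ hpp
      by_cases hip0 : ip = 0
      · by_cases hiq0 : iq = 0
        · -- both endpoints have zero first coordinate: contradiction
          subst hip0; subst hiq0
          set k : ℝ := (B.coord 0).linear d with hk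
          have e1 : B.coord 0 y + tm * k = 0 := by rw [← hlin 0 y d tm]; exact hip
          have e2 : B.coord 0 y + tp * k = 0 := by rw [← hlin 0 y d tp]; exact hiq
          have hpos : 0 < B.coord 0 y := by rw [hint] at hy; exact hy 0
          rcases lt_trichotomy k 0 with hk0 | hk0 | hk0
          · have := mul_pos_of_neg_of_neg htm hk0; linarith
          · rw [hk0] at e1; linarith
          · have := mul_pos htp hk0; linarith
        · exact hne (hfq ▸ hedge _ hqΔ iq hiq0 hiq)
      · exact hne (hfp ▸ hedge _ hpΔ ip hip0 hip)
  -- f = f a on the interior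
  have hintconst : ∀ y ∈ interior Δ, f y = f a := by
    intro y0 hy0
    by_contra hne
    have hbc : b ≠ c := by
      intro h
      exact (hind.injective.ne (show (1 : Fin 3) ≠ 2 by decide)) (by simpa using h)
    have hd : c - b ≠ (0 : Eu 2) := sub_ne_zero.2 (Ne.symm hbc)
    obtain ⟨tm, tp, htm, htp, hIcc, hpm, _⟩ := chordEx hconvΔ hcompΔ hy0 hd
    set γ : ℝ → Eu 2 := fun t => y0 + t • (c - b) with hγ
    have hγc : Continuous γ := continuous_const.add (continuous_id.smul continuous_const)
    -- coord 0 is constant along γ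
    have hk0 : (B.coord 0).linear (c - b) = 0 := by
      have h := (B.coord 0).map_vadd b (c - b)
      rw [vadd_eq_add, vadd_eq_add, sub_add_cancel] at h
      have hB1 : B 1 = b := rfl
      have hB2 : B 2 = c := rfl
      have hcb := B.coord_apply_ne (i := 0) (j := 2) (by decide)
      have hbb := B.coord_apply_ne (i := 0) (j := 1) (by decide)
      rw [hB2] at hcb
      rw [hB1] at hbb
      rw [hcb, hbb] at h
      linarith
    have hconst0 : ∀ t, B.coord 0 (γ t) = B.coord 0 y0 := by
      intro t
      rw [hγ]
      show B.coord 0 (y0 + t • (c-b)) = _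
      rw [hlin 0 y0 (c-b) t, hk0]; ring
    have hpos0 : 0 < B.coord 0 y0 := by rw [hint] at hy0; exact hy0 0
    -- f (γ tm) = f a
    have hpΔ : γ tm ∈ Δ := hIcc tm ⟨le_refl _, by linarith⟩
    obtain ⟨ip, hip⟩ := hbdry _ hpΔ hpm
    have hip0 : ip ≠ 0 := by
      intro h; subst h
      rw [hconst0 tm] at hip; linarith
    have hfp : f (γ tm) = f a := hedge _ hpΔ ip hip0 hip
    -- sInf argument on C
    set C : Set ℝ := Icc tm 0 ∩ (f ∘ γ) ⁻¹' {f y0} with hC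
    have hγΔ : ∀ t ∈ Icc tm (0:ℝ), γ t ∈ Δ := fun t ht => hIcc t ⟨ht.1, le_trans ht.2 htp.le⟩
    have hCcl : IsClosed C := by
      apply ContinuousOn.preimage_isClosed_of_isClosed _ isClosed_Icc isClosed_singleton
      exact hf.comp hγc.continuousOn (fun t ht => hΔ (hγΔ t ht))
    have hCcp : IsCompact C := isCompact_Icc.of_isClosed_subset hCcl inter_subset_left
    have hCne : C.Nonempty := ⟨0, ⟨htm.le, le_refl _⟩, by simp [hγ]⟩
    set s0 : ℝ := sInf C with hs0
    have hs0C : s0 ∈ C := hCcp.sInf_mem hCne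
    have hfs0 : f (γ s0) = f y0 := hs0C.2
    have hs0m : s0 ∈ Icc tm (0:ℝ) := hs0C.1
    have hs0tm : tm < s0 := by
      rcases lt_or_eq_of_le hs0m.1 with h | h
      · exact h
      · exfalso; rw [← h] at hfs0; rw [hfp] at hfs0; exact hne hfs0.symm
    -- γ s0 is in the interior
    have hs0int : γ s0 ∈ interior Δ := by
      rw [hint]
      intro i
      have hmem : γ s0 ∈ Δ := hγΔ s0 hs0m
      rcases lt_or_eq_of_le ((hmemΔ _).1 hmem i) with h | h
      · exact h
      · exfalso
        by_cases hi0 : i = 0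
        · subst hi0; rw [hconst0 s0] at h; linarith
        · exact hne (hfs0 ▸ hedge _ hmem i hi0 h.symm)
    -- local constancy near γ s0 pushes s0 down: contradiction
    obtain ⟨U, hU, hUc⟩ := key (γ s0) hs0int (by rw [hfs0]; exact hne)
    have : γ ⁻¹' U ∈ 𝓝 s0 := hγc.continuousAt.preimage_mem_nhds hU
    obtain ⟨δ, hδ, hball⟩ := Metric.mem_nhds_iff.1 this
    set t1 : ℝ := max (s0 - δ/2) ((tm + s0)/2) with ht1
    have ht1lt : t1 < s0 := max_lt (by linarith) (by linarith)
    have ht1gt : tm < t1 := lt_of_lt_of_le (by linarith) (le_max_right _ _)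
    have ht1ball : t1 ∈ ball s0 δ := by
      simp only [mem_ball, Real.dist_eq]
      rw [abs_of_neg (by linarith)]
      have : s0 - δ/2 ≤ t1 := le_max_left _ _
      linarith
    have ht1C : t1 ∈ C := by
      refine ⟨⟨ht1gt.le, by linarith [hs0m.2]⟩, ?_⟩
      show f (γ t1) ∈ ({f y0} : Set (Eu m))
      rw [mem_singleton_iff, hUc (γ t1) (hball ht1ball), hfs0]
    have := csInf_le (⟨tm, fun x hx => hx.1.1⟩ : BddBelow C) ht1C
    rw [← hs0] at this
    linarith
  -- extend to all of Δ by continuity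
  intro y hy
  obtain hzint := B.centroid_mem_interior_convexHull
  rw [hrange] at hzint
  set z : Eu 2 := Finset.univ.centroid ℝ ⇑B with hz
  have hzi : z ∈ interior Δ := hzint
  set g : ℝ → Eu 2 := fun t => t • z + (1 - t) • y with hg
  have hgc : Continuous g := (continuous_id.smul continuous_const).add ((continuous_const.sub continuous_id).smul continuous_const)
  have hg0 : g 0 = y := by simp [hg]
  have hgin : ∀ t ∈ Ioc (0:ℝ) 1, f (g t) = f a := by
    intro t ht
    apply hintconst
    exact hconvΔ.combo_interior_self_mem_interior hzi hy ht.1 (by linarith [ht.2]) (by ring)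
  have hfc : ContinuousAt f y := hf.continuousAt (hΩo.mem_nhds (hΔ hy))
  have h1 : Filter.Tendsto (f ∘ g) (𝓝[>] (0:ℝ)) (𝓝 (f y)) := by
    have : Filter.Tendsto g (𝓝 (0:ℝ)) (𝓝 y) := hg0 ▸ hgc.continuousAt
    exact (hfc.tendsto.comp this).mono_left nhdsWithin_le_nhds
  have h2 : Filter.Tendsto (f ∘ g) (𝓝[>] (0:ℝ)) (𝓝 (f a)) := by
    apply Filter.Tendsto.congr' _ tendsto_const_nhds
    filter_upwards [Ioc_mem_nhdsGT_of_mem (Set.mem_Ico.2 ⟨le_refl _, zero_lt_one⟩)] with t ht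
    exact (hgin t ht).symm
  exact tendsto_nhds_unique h1 h2
end
end

section
/- Let Ω ⊂ ℝ² be open, f : Ω → ℝᵐ continuous satisfying condition (a) (at each point f is locally constant or constant along a full line-segment component through the point). If x ∈ Ω is not in the locally-constant set C_f, then there is exactly one line L through x such that f is constant on the connected component of x in L ∩ Ω. -/
noncomputable section
open Set Metric Topology

/-- `f` is constant in a neighborhood of `x` (inside `Ω`). -/
def LocConstAt {m : ℕ} (Ω : Set (Eu 2)) (f : Eu 2 → Eu m) (x : Eu 2) : Prop :=
  ∃ U ∈ 𝓝 x, U ⊆ Ω ∧ ∀ y ∈ U, f y = f x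

/-- A function that is locally constant on a preconnected set is constant on it. -/
lemma const_on_preconnected {α β : Type*} [TopologicalSpace α] (f : α → β) {W : Set α}
    (hW : IsPreconnected W)
    (h : ∀ w ∈ W, ∃ N, IsOpen N ∧ w ∈ N ∧ ∀ z ∈ N, f z = f w) {y : α} (hy : y ∈ W) :
    ∀ w ∈ W, f w = f y := by
  choose! N hNo hNm hNc using h
  set A : Set α := ⋃ w ∈ {w ∈ W | f w = f y}, N w with hA
  set B : Set α := ⋃ w ∈ {w ∈ W | f w ≠ f y}, N w with hB
  have hAo : IsOpen A := isOpen_biUnion fun w hw => hNo w hw.1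
  have hBo : IsOpen B := isOpen_biUnion fun w hw => hNo w hw.1
  have hcover : W ⊆ A ∪ B := by
    intro w hw
    by_cases hfw : f w = f y
    · exact Or.inl (mem_biUnion ⟨hw, hfw⟩ (hNm w hw))
    · exact Or.inr (mem_biUnion ⟨hw, hfw⟩ (hNm w hw))
  have hdisj : ∀ z, z ∈ A → z ∈ B → False := by
    intro z hzA hzB
    obtain ⟨w1, hw1, hz1⟩ := mem_iUnion₂.mp hzA
    obtain ⟨w2, hw2, hz2⟩ := mem_iUnion₂.mp hzB
    exact hw2.2 ((hNc w2 hw2.1 z hz2).symm.trans ((hNc w1 hw1.1 z hz1).trans hw1.2))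
  intro w hw
  by_contra hfw
  have hAne : (W ∩ A).Nonempty := ⟨y, hy, mem_biUnion ⟨hy, rfl⟩ (hNm y hy)⟩
  have hBne : (W ∩ B).Nonempty := ⟨w, hw, mem_biUnion ⟨hw, hfw⟩ (hNm w hw)⟩
  obtain ⟨z, hz⟩ := hW A B hAo hBo hcover hAne hBne
  exact hdisj z hz.2.1 hz.2.2

/-- In a preconnected set `V`, a nonempty open `W ⊆ V` missing a point of `V` has a
frontier point inside `V`. -/
lemma exists_frontier_point {α : Type*} [TopologicalSpace α] {V W : Set α}
    (hV : IsPreconnected V) (hWo : IsOpen W) (hWV : W ⊆ V) {y x : α}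
    (hy : y ∈ W) (hx : x ∈ V) (hxW : x ∉ W) :
    ∃ z ∈ V, z ∈ closure W ∧ z ∉ W := by
  by_contra h
  push_neg at h
  have hcover : V ⊆ W ∪ (closure W)ᶜ := fun z hz =>
    (em (z ∈ closure W)).elim (fun hc => Or.inl (h z hz hc)) Or.inr
  obtain ⟨z, _, hzW, hzc⟩ := hV W (closure W)ᶜ hWo isClosed_closure.isOpen_compl hcover
    ⟨y, hWV hy, hy⟩ ⟨x, hx, fun hc => hxW (h x hx hc)⟩
  exact hzc (subset_closure hzW)

set_option maxHeartbeats 2000000 in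
theorem stmt_1 {m : ℕ} (Ω : Set (Eu 2)) (hΩo : IsOpen Ω)
    (f : Eu 2 → Eu m) (hf : ContinuousOn f Ω)
    (ha : ∀ x ∈ Ω, LocConstAt Ω f x ∨
      ∃ L : Set (Eu 2), IsLineThrough L x ∧
        ∀ y ∈ connectedComponentIn (L ∩ Ω) x, f y = f x)
    (x : Eu 2) (hx : x ∈ Ω) (hxC : ¬ LocConstAt Ω f x) :
    ∃! L : Set (Eu 2), IsLineThrough L x ∧
      ∀ y ∈ connectedComponentIn (L ∩ Ω) x, f y = f x := by
  obtain hx' | ⟨L, hL, hLconst⟩ := ha x hx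
  · exact absurd hx' hxC
  refine ⟨L, ⟨hL, hLconst⟩, fun L' hL'pair => ?_⟩
  obtain ⟨hL', hL'const⟩ := hL'pair
  by_contra hne
  apply hxC
  obtain ⟨hxL1, d1, hd10, hLdef⟩ := hL'
  obtain ⟨hxL2, d2, hd20, hL2def⟩ := hL
  -- the two directions are not parallel
  have hnp : ∀ c : ℝ, d2 ≠ c • d1 := by
    rintro c rfl
    have hc : c ≠ 0 := by rintro rfl; simp at hd20
    apply hne
    rw [hLdef, hL2def]
    ext p
    simp only [mem_setOf_eq]
    constructor
    · rintro ⟨t, rfl⟩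
      exact ⟨t / c, by rw [smul_smul]; field_simp⟩
    · rintro ⟨t, rfl⟩
      exact ⟨t * c, by rw [smul_smul]⟩
  have hli : LinearIndependent ℝ ![d1, d2] := by
    rw [LinearIndependent.pair_iff' hd10]
    intro a ha'
    exact hnp a ha'.symm
  have hcard : Fintype.card (Fin 2) = Module.finrank ℝ (Eu 2) := by simp
  set b : Module.Basis (Fin 2) ℝ (Eu 2) := basisOfLinearIndependentOfCardEqFinrank hli hcard
    with hbdef
  have hbcoe : ⇑b = ![d1, d2] := coe_basisOfLinearIndependentOfCardEqFinrank hli hcard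
  have hb0 : b 0 = d1 := by rw [hbcoe]; rfl
  have hb1 : b 1 = d2 := by rw [hbcoe]; rfl
  have hrepr : ∀ w : Eu 2, (b.repr w 0) • d1 + (b.repr w 1) • d2 = w := by
    intro w
    have := b.sum_repr w
    rwa [Fin.sum_univ_two, hb0, hb1] at this
  obtain ⟨K, hK0, hcoord⟩ :
      ∃ K : ℝ, 0 < K ∧ ∀ (w : Eu 2) (i : Fin 2), |b.repr w i| ≤ K * ‖w‖ := by
    set φ : Fin 2 → (Eu 2 →L[ℝ] ℝ) := fun i => LinearMap.toContinuousLinearMap (b.coord i)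
      with hφ
    refine ⟨max ‖φ 0‖ ‖φ 1‖ + 1, ?_, ?_⟩
    · have h0 := le_max_left ‖φ 0‖ ‖φ 1‖
      have := norm_nonneg (φ 0)
      linarith
    · intro w i
      have h1 : |b.repr w i| = ‖φ i w‖ := by
        simp [hφ, Module.Basis.coord_apply, Real.norm_eq_abs]
      rw [h1]
      have h2 : ‖φ i w‖ ≤ ‖φ i‖ * ‖w‖ := (φ i).le_opNorm w
      have h3 : ‖φ i‖ ≤ max ‖φ 0‖ ‖φ 1‖ + 1 := by
        have : ‖φ i‖ ≤ max ‖φ 0‖ ‖φ 1‖ := by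
          fin_cases i
          · exact le_max_left _ _
          · exact le_max_right _ _
        linarith
      calc ‖φ i w‖ ≤ ‖φ i‖ * ‖w‖ := h2
        _ ≤ (max ‖φ 0‖ ‖φ 1‖ + 1) * ‖w‖ := mul_le_mul_of_nonneg_right h3 (norm_nonneg w)
  set D : ℝ := ‖d1‖ + ‖d2‖ + 1 with hDdef
  have hD0 : 0 < D := by positivity
  obtain ⟨r, hr0, hrΩ⟩ := Metric.isOpen_iff.mp hΩo x hx
  set C : ℝ := 2 * K * D with hCdef
  have hC0 : 0 < C := by positivity
  set r' : ℝ := r / (C + 1) with hr'def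
  have hr'0 : 0 < r' := by positivity
  have hr'r : r' ≤ r := by
    rw [hr'def]
    apply div_le_self hr0.le
    linarith
  have hsub : ball x r' ⊆ Ω := fun z hz => hrΩ (ball_subset_ball hr'r hz)
  -- KEY: any non-locally-constant point of the small ball has the same value as x
  have key : ∀ y ∈ ball x r', ∀ Ly : Set (Eu 2), IsLineThrough Ly y →
      (∀ z ∈ connectedComponentIn (Ly ∩ Ω) y, f z = f y) → f y = f x := by
    intro y hy Ly hLy hLyc
    obtain ⟨hyLy, d, hd0, hLydef⟩ := hLy
    set a0 : ℝ := b.repr d 0 with ha0def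
    set a1 : ℝ := b.repr d 1 with ha1def
    set u : ℝ := b.repr (y - x) 0 with hudef
    set v : ℝ := b.repr (y - x) 1 with hvdef
    have hd_repr : a0 • d1 + a1 • d2 = d := hrepr d
    have hyx_repr : u • d1 + v • d2 = y - x := hrepr (y - x)
    have hy_eq : y = x + (u • d1 + v • d2) := by rw [hyx_repr]; abel
    obtain ⟨e, LL, t, s, hcomp, hLLdef, hpe, hsb, heD⟩ :
        ∃ (e : Eu 2) (LL : Set (Eu 2)) (t s : ℝ),
          (∀ z ∈ connectedComponentIn (LL ∩ Ω) x, f z = f x) ∧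
          (LL = {p : Eu 2 | ∃ τ : ℝ, p = x + τ • e}) ∧
          (y + t • d = x + s • e) ∧ |s| ≤ |u| + |v| ∧ ‖e‖ ≤ D := by
      by_cases h01 : |a0| ≤ |a1|
      · have ha1 : a1 ≠ 0 := by
          intro h
          rw [h, abs_zero] at h01
          have h0 : a0 = 0 := abs_nonpos_iff.mp h01
          rw [h0, h] at hd_repr
          simp at hd_repr
          exact hd0 hd_repr.symm
        refine ⟨d1, L', -v / a1, u + (-v / a1) * a0, hL'const, hLdef, ?_, ?_, ?_⟩
        · rw [hy_eq, ← hd_repr]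
          match_scalars <;> (try field_simp) <;> (try ring)
        · have hb : |(-v / a1) * a0| ≤ |v| := by
            rw [abs_mul, abs_div, abs_neg, div_mul_eq_mul_div,
              div_le_iff₀ (abs_pos.mpr ha1)]
            exact mul_le_mul_of_nonneg_left h01 (abs_nonneg v)
          calc |u + (-v / a1) * a0| ≤ |u| + |(-v / a1) * a0| := abs_add_le _ _
            _ ≤ |u| + |v| := by linarith
        · rw [hDdef]
          have := norm_nonneg d2
          linarith
      · push_neg at h01
        have ha0 : a0 ≠ 0 := by
          intro h
          rw [h, abs_zero] at h01
          exact absurd h01 (by simp [abs_nonneg])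
        refine ⟨d2, L, -u / a0, v + (-u / a0) * a1, hLconst, hL2def, ?_, ?_, ?_⟩
        · rw [hy_eq, ← hd_repr]
          match_scalars <;> (try field_simp) <;> (try ring)
        · have hb : |(-u / a0) * a1| ≤ |u| := by
            rw [abs_mul, abs_div, abs_neg, div_mul_eq_mul_div,
              div_le_iff₀ (abs_pos.mpr ha0)]
            exact mul_le_mul_of_nonneg_left h01.le (abs_nonneg u)
          calc |v + (-u / a0) * a1| ≤ |v| + |(-u / a0) * a1| := abs_add_le _ _
            _ ≤ |u| + |v| := by linarith
        · rw [hDdef]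
          have := norm_nonneg d1
          linarith
    set p : Eu 2 := y + t • d with hpdef
    have hps : p - x = s • e := by rw [hpe]; abel
    have hyx : ‖y - x‖ < r' := by rwa [mem_ball, dist_eq_norm] at hy
    have hpx : ‖p - x‖ ≤ C * ‖y - x‖ := by
      rw [hps, norm_smul]
      have h4 : ‖s‖ * ‖e‖ ≤ (|u| + |v|) * D :=
        mul_le_mul hsb heD (norm_nonneg e) (by positivity)
      have h5 := hcoord (y - x) 0
      have h6 := hcoord (y - x) 1
      have h7 : (|u| + |v|) * D ≤ (2 * K * ‖y - x‖) * D := by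
        apply mul_le_mul_of_nonneg_right _ hD0.le
        rw [hudef, hvdef]; linarith
      rw [hCdef]
      calc ‖s‖ * ‖e‖ ≤ (2 * K * ‖y - x‖) * D := le_trans h4 h7
        _ = 2 * K * D * ‖y - x‖ := by ring
    have hpball : p ∈ ball x r := by
      rw [mem_ball, dist_eq_norm]
      have h8 : C * ‖y - x‖ < C * r' := mul_lt_mul_of_pos_left hyx hC0
      have h9 : C * r' ≤ r := by
        rw [hr'def, mul_comm, div_mul_eq_mul_div, div_le_iff₀ (by positivity : (0:ℝ) < C + 1)]
        nlinarith
      linarith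
    have hyball : y ∈ ball x r := ball_subset_ball hr'r hy
    have hsegΩ1 : segment ℝ y p ⊆ Ω :=
      subset_trans ((convex_ball x r).segment_subset hyball hpball) hrΩ
    have hsegLy : segment ℝ y p ⊆ Ly := by
      intro z hz
      rw [segment_eq_image'] at hz
      obtain ⟨θ, _, rfl⟩ := hz
      rw [hLydef]
      refine ⟨θ * t, ?_⟩
      have h : p - y = t • d := by rw [hpdef]; abel
      simp only [h, smul_smul]
    have hfp1 : f p = f y :=
      hLyc p ((convex_segment y p).isPreconnected.subset_connectedComponentIn
        (left_mem_segment ℝ y p) (subset_inter hsegLy hsegΩ1) (right_mem_segment ℝ y p))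
    have hxball : x ∈ ball x r := mem_ball_self hr0
    have hsegΩ2 : segment ℝ x p ⊆ Ω :=
      subset_trans ((convex_ball x r).segment_subset hxball hpball) hrΩ
    have hsegLL : segment ℝ x p ⊆ LL := by
      intro z hz
      rw [segment_eq_image'] at hz
      obtain ⟨θ, _, rfl⟩ := hz
      rw [hLLdef]
      refine ⟨θ * s, ?_⟩
      simp only [hps, smul_smul]
    have hfp2 : f p = f x :=
      hcomp p ((convex_segment x p).isPreconnected.subset_connectedComponentIn
        (left_mem_segment ℝ x p) (subset_inter hsegLL hsegΩ2) (right_mem_segment ℝ x p))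
    rw [← hfp1, hfp2]
  -- assemble: f is constant on ball x r'
  refine ⟨ball x r', ball_mem_nhds x hr'0, hsub, ?_⟩
  intro y hy
  by_cases hyc : LocConstAt Ω f y
  · -- locally constant case: follow the connected component of the locally-constant set
    have hopenLC : IsOpen {z | LocConstAt Ω f z} := by
      rw [isOpen_iff_mem_nhds]
      rintro z ⟨U, hU, hUΩ, hUc⟩
      obtain ⟨N, hNU, hNo, hNz⟩ := _root_.mem_nhds_iff.mp hU
      apply Filter.mem_of_superset (hNo.mem_nhds hNz)
      intro z' hz'
      exact ⟨U, _root_.mem_nhds_iff.mpr ⟨N, hNU, hNo, hz'⟩, hUΩ,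
        fun w hw => by rw [hUc w hw, hUc z' (hNU hz')]⟩
    set O : Set (Eu 2) := {z | LocConstAt Ω f z} ∩ ball x r' with hOdef
    have hOo : IsOpen O := hopenLC.inter isOpen_ball
    set W : Set (Eu 2) := connectedComponentIn O y with hWdef
    have hyO : y ∈ O := ⟨hyc, hy⟩
    have hyW : y ∈ W := mem_connectedComponentIn hyO
    have hWO : W ⊆ O := connectedComponentIn_subset O y
    have hWo : IsOpen W := hOo.connectedComponentIn
    have hconstW : ∀ w ∈ W, f w = f y := by
      apply const_on_preconnected f isPreconnected_connectedComponentIn _ hyW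
      intro w hw
      obtain ⟨U, hU, hUΩ, hUc⟩ := (hWO hw).1
      obtain ⟨N, hNU, hNo, hNw⟩ := _root_.mem_nhds_iff.mp hU
      exact ⟨N, hNo, hNw, fun z hz => hUc z (hNU hz)⟩
    have hxnotW : x ∉ W := fun hxW => hxC (hWO hxW).1
    obtain ⟨z, hzball, hzcl, hzW⟩ :=
      exists_frontier_point (convex_ball x r').isPreconnected hWo
        (fun w hw => (hWO hw).2) hyW (mem_ball_self hr'0) hxnotW
    have hzO : z ∉ O := by
      intro hzO
      apply hzW
      have hcz : IsOpen (connectedComponentIn O z) := hOo.connectedComponentIn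
      obtain ⟨w', hw'c, hw'W⟩ :=
        mem_closure_iff.mp hzcl _ hcz (mem_connectedComponentIn hzO)
      have e1 : connectedComponentIn O z = connectedComponentIn O w' :=
        connectedComponentIn_eq hw'c
      have e2 : connectedComponentIn O y = connectedComponentIn O w' :=
        connectedComponentIn_eq hw'W
      rw [hWdef, e2, ← e1]
      exact mem_connectedComponentIn hzO
    have hzloc : ¬ LocConstAt Ω f z := fun h => hzO ⟨h, hzball⟩
    obtain hl | ⟨Lz, hLz, hLzc⟩ := ha z (hsub hzball)
    · exact absurd hl hzloc
    have hfz : f z = f x := key z hzball Lz hLz hLzc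
    have hzΩ : z ∈ Ω := hsub hzball
    have hcz : ContinuousAt f z := hf.continuousAt (hΩo.mem_nhds hzΩ)
    haveI hnb : (𝓝[W] z).NeBot := mem_closure_iff_nhdsWithin_neBot.mp hzcl
    have h1 : Filter.Tendsto f (𝓝[W] z) (𝓝 (f z)) := hcz.tendsto.mono_left nhdsWithin_le_nhds
    have h2 : Filter.Tendsto f (𝓝[W] z) (𝓝 (f y)) := by
      have heq : (fun _ : Eu 2 => f y) =ᶠ[𝓝[W] z] f :=
        eventually_mem_nhdsWithin.mono fun w hw => (hconstW w hw).symm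
      exact Filter.Tendsto.congr' heq tendsto_const_nhds
    calc f y = f z := (tendsto_nhds_unique h1 h2).symm
      _ = f x := hfz
  · obtain hl | ⟨Ly, hLy, hLyc⟩ := ha y (hsub hy)
    · exact absurd hl hyc
    exact key y hy Ly hLy hLyc
end
end

section
/- Let Ω ⊂ ℝ² be open and f : Ω → ℝᵐ continuous satisfying condition (a). Then for every x ∈ Ω \ C_f, the constancy segment l_x (the connected component of x in L_x ∩ Ω, where L_x is the unique constancy line through x) is entirely contained in Ω \ C_f. Moreover, for any y, z ∈ Ω \ C_f, either l_y ∩ l_z = ∅ or l_y = l_z. -/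
noncomputable section
open Set Metric Topology

set_option linter.unusedVariables false
set_option linter.unnecessarySeqFocus false

namespace StmtTwo

def lineThru (x d : Eu 2) : Set (Eu 2) := {p | ∃ t : ℝ, p = x + t • d}

lemma self_mem_lineThru (x d : Eu 2) : x ∈ lineThru x d := ⟨0, by simp⟩

def det2 (a b : Eu 2) : ℝ := a 0 * b 1 - a 1 * b 0

lemma norm_sq_two (v : Eu 2) : ‖v‖ ^ 2 = v 0 ^ 2 + v 1 ^ 2 := by
  rw [EuclideanSpace.norm_eq, Real.sq_sqrt (by positivity)]
  simp [Fin.sum_univ_two, sq_abs]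

lemma abs_det2_le (a b : Eu 2) : |det2 a b| ≤ ‖a‖ * ‖b‖ := by
  have ha := norm_sq_two a
  have hb := norm_sq_two b
  have key : (det2 a b) ^ 2 ≤ (‖a‖ * ‖b‖) ^ 2 := by
    rw [mul_pow, ha, hb]
    simp only [det2]
    nlinarith [sq_nonneg (a 0 * b 0 + a 1 * b 1)]
  calc |det2 a b| = √((det2 a b) ^ 2) := (Real.sqrt_sq_eq_abs _).symm
    _ ≤ √((‖a‖ * ‖b‖) ^ 2) := Real.sqrt_le_sqrt key
    _ = ‖a‖ * ‖b‖ := Real.sqrt_sq (by positivity)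

lemma det2_add_right (a b c : Eu 2) : det2 a (b + c) = det2 a b + det2 a c := by
  simp only [det2, PiLp.add_apply]; ring

lemma det2_smul_right (a : Eu 2) (t : ℝ) (b : Eu 2) : det2 a (t • b) = t * det2 a b := by
  simp only [det2, PiLp.smul_apply, smul_eq_mul]; ring

lemma det2_sub_right (a b c : Eu 2) : det2 a (b - c) = det2 a b - det2 a c := by
  simp only [det2, PiLp.sub_apply]; ring

lemma det2_swap (a b : Eu 2) : det2 a b = - det2 b a := by simp only [det2]; ring

lemma eq_smul_of_det2_zero {d v : Eu 2} (hd : d ≠ 0) (h : det2 d v = 0) :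
    ∃ t : ℝ, v = t • d := by
  have hd' : d 0 ≠ 0 ∨ d 1 ≠ 0 := by
    by_contra hc
    push_neg at hc
    exact hd (PiLp.ext fun i => by fin_cases i <;> simp [hc.1, hc.2])
  simp only [det2] at h
  rcases hd' with h0 | h1
  · refine ⟨v 0 / d 0, PiLp.ext fun i => ?_⟩
    fin_cases i <;> simp only [Fin.isValue, Fin.mk_zero, Fin.mk_one, PiLp.smul_apply, smul_eq_mul] <;> field_simp <;> nlinarith [h]
  · refine ⟨v 1 / d 1, PiLp.ext fun i => ?_⟩
    fin_cases i <;> simp only [Fin.isValue, Fin.mk_zero, Fin.mk_one, PiLp.smul_apply, smul_eq_mul] <;> field_simp <;> nlinarith [h]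

lemma mem_lineThru_iff {x d q : Eu 2} (hd : d ≠ 0) :
    q ∈ lineThru x d ↔ det2 d (q - x) = 0 := by
  constructor
  · rintro ⟨t, rfl⟩
    rw [add_sub_cancel_left, det2_smul_right]
    simp only [det2]
    ring
  · intro h
    obtain ⟨t, ht⟩ := eq_smul_of_det2_zero hd h
    exact ⟨t, by rw [← ht]; abel⟩

lemma lineThru_rebase {x d p : Eu 2} (hp : p ∈ lineThru x d) {k : ℝ} (hk : k ≠ 0) :
    lineThru x d = lineThru p (k • d) := by
  obtain ⟨s, rfl⟩ := hp
  ext q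
  constructor
  · rintro ⟨t, rfl⟩
    exact ⟨(t - s) / k, by rw [smul_smul]; field_simp; module⟩
  · rintro ⟨t, rfl⟩
    exact ⟨s + t * k, by rw [smul_smul]; module⟩

lemma convex_lineThru (x d : Eu 2) : Convex ℝ (lineThru x d) := by
  rintro p ⟨s, rfl⟩ q ⟨t, rfl⟩ a b ha hb hab
  refine ⟨a * s + b * t, ?_⟩
  have : a • (x + s • d) + b • (x + t • d) = (a + b) • x + (a * s + b * t) • d := by module
  rw [this, hab, one_smul]

variable {m : ℕ} {Ω : Set (Eu 2)} {f : Eu 2 → Eu m}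

/-- from a local-constancy witness, get an open set of locally-constant points. -/
lemma locConstAt_open {x : Eu 2} (h : LocConstAt Ω f x) :
    ∃ V : Set (Eu 2), IsOpen V ∧ x ∈ V ∧ V ⊆ Ω ∧ ∀ y ∈ V, LocConstAt Ω f y ∧ f y = f x := by
  obtain ⟨U, hU, hUΩ, hUc⟩ := h
  refine ⟨interior U, isOpen_interior, mem_interior_iff_mem_nhds.2 hU,
    interior_subset.trans hUΩ, fun y hy => ?_⟩
  have hyU : y ∈ U := interior_subset hy
  exact ⟨⟨U, mem_interior_iff_mem_nhds.1 hy, hUΩ, fun z hz => by rw [hUc z hz, hUc y hyU]⟩,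
    hUc y hyU⟩
  
lemma isOpen_setOf_locConstAt : IsOpen {y | LocConstAt Ω f y} := by
  rw [isOpen_iff_forall_mem_open]
  intro y hy
  obtain ⟨V, hVo, hyV, _, hV⟩ := locConstAt_open hy
  exact ⟨V, fun z hz => (hV z hz).1, hVo, hyV⟩

/-- a preconnected set of locally-constant points has constant value. -/
lemma const_on_of_locConst {S : Set (Eu 2)} (hS : IsPreconnected S)
    (hloc : ∀ v ∈ S, LocConstAt Ω f v) {z : Eu 2} (hz : z ∈ S) :
    ∀ v ∈ S, f v = f z := by
  set u : Set (Eu 2) := {y | ∃ V : Set (Eu 2), IsOpen V ∧ y ∈ V ∧ ∀ y' ∈ V, f y' = f z} with hu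
  set w : Set (Eu 2) := {y | f y ≠ f z ∧ ∃ V : Set (Eu 2), IsOpen V ∧ y ∈ V ∧
      ∀ y' ∈ V, f y' = f y} with hw
  have hou : IsOpen u := by
    rw [isOpen_iff_forall_mem_open]
    rintro y ⟨V, hVo, hyV, hVc⟩
    exact ⟨V, fun y' hy' => ⟨V, hVo, hy', hVc⟩, hVo, hyV⟩
  have how : IsOpen w := by
    rw [isOpen_iff_forall_mem_open]
    rintro y ⟨hyne, V, hVo, hyV, hVc⟩
    refine ⟨V, fun y' hy' => ⟨by rw [hVc y' hy']; exact hyne, V, hVo, hy',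
      fun y'' hy'' => by rw [hVc y'' hy'', hVc y' hy']⟩, hVo, hyV⟩
  have hcover : S ⊆ u ∪ w := by
    intro v hv
    obtain ⟨V, hVo, hvV, _, hV⟩ := locConstAt_open (hloc v hv)
    by_cases hfv : f v = f z
    · exact Or.inl ⟨V, hVo, hvV, fun y' hy' => by rw [(hV y' hy').2, hfv]⟩
    · exact Or.inr ⟨hfv, V, hVo, hvV, fun y' hy' => (hV y' hy').2⟩
  have hdis : S ∩ (u ∩ w) = ∅ := by
    ext y
    simp only [mem_inter_iff, mem_empty_iff_false, iff_false]
    rintro ⟨-, ⟨V, hVo, hyV, hVc⟩, hyne, -⟩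
    exact hyne (hVc y hyV)
  have hzu : (S ∩ u).Nonempty := by
    obtain ⟨V, hVo, hzV, _, hV⟩ := locConstAt_open (hloc z hz)
    exact ⟨z, hz, V, hVo, hzV, fun y' hy' => (hV y' hy').2⟩
  have : ¬(S ∩ w).Nonempty := fun hne => by
    obtain ⟨a, ha⟩ := hS u w hou how hcover hzu hne
    rw [← mem_empty_iff_false a, ← hdis]
    exact ⟨ha.1, ha.2⟩
  intro v hv
  rcases hcover hv with ⟨V, _, hvV, hVc⟩ | hvw
  · exact hVc v hvV
  · exact absurd ⟨v, hv, hvw⟩ this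

/-- the part of a constancy line inside a ball around `p` has constant value. -/
lemma chord_const {p : Eu 2} {ε : ℝ}
    (hball : ball p ε ⊆ Ω) {x0 e : Eu 2} {w : Eu 2} (hw : w ∈ ball p ε)
    (hwN : w ∈ lineThru x0 e)
    (hNc : ∀ y ∈ connectedComponentIn (lineThru x0 e ∩ Ω) w, f y = f w) :
    ∀ q ∈ lineThru x0 e ∩ ball p ε, f q = f w := by
  intro q hq
  apply hNc
  have hsub : lineThru x0 e ∩ ball p ε ⊆ connectedComponentIn (lineThru x0 e ∩ Ω) w :=
    IsPreconnected.subset_connectedComponentIn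
      (((convex_lineThru x0 e).inter (convex_ball p ε)).isPreconnected)
      ⟨hwN, hw⟩ (fun y hy => ⟨hy.1, hball hy.2⟩)
  exact hsub hq

/-- Core propagation lemma. -/
lemma core (hf : ContinuousOn f Ω)
    (ha : ∀ x ∈ Ω, LocConstAt Ω f x ∨ ∃ L : Set (Eu 2), IsLineThrough L x ∧
      ∀ y ∈ connectedComponentIn (L ∩ Ω) x, f y = f x)
    {p : Eu 2} {ε δ : ℝ} (hδ : 0 < δ) (hδε : δ < ε) (hball : ball p ε ⊆ Ω)
    (H : ∀ w ∈ ball p δ, ∀ e : Eu 2, e ≠ 0 →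
      (∀ q ∈ lineThru w e ∩ ball p ε, f q ≠ f p) → False) :
    LocConstAt Ω f p := by
  have hδball : ball p δ ⊆ ball p ε := ball_subset_ball hδε.le
  have hδΩ : ball p δ ⊆ Ω := hδball.trans hball
  refine ⟨ball p δ, ball_mem_nhds p hδ, hδΩ, ?_⟩
  intro z hz
  by_contra hne
  set D : Set (Eu 2) := ball p δ ∩ f ⁻¹' {f p}ᶜ with hD
  have hDopen : IsOpen D :=
    (hf.mono hδΩ).isOpen_inter_preimage isOpen_ball isOpen_compl_singleton
  have hzD : z ∈ D := ⟨hz, by simpa using hne⟩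
  set W := connectedComponentIn D z with hWdef
  have hWo : IsOpen W := hDopen.connectedComponentIn
  have hWD : W ⊆ D := connectedComponentIn_subset _ _
  have hWpre : IsPreconnected W := isPreconnected_connectedComponentIn
  have hzW : z ∈ W := mem_connectedComponentIn hzD
  -- step i : all points of W are locally constant
  have hWloc : ∀ v ∈ W, LocConstAt Ω f v := by
    intro v hv
    by_contra hnl
    have hvD := hWD hv
    have hvΩ : v ∈ Ω := hδΩ hvD.1
    rcases ha v hvΩ with h | ⟨N, ⟨hvN, e, he, hNeq⟩, hNc⟩
    · exact hnl h
    · subst hNeq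
      refine H v hvD.1 e he ?_
      intro q hq
      rw [chord_const hball (hδball hvD.1) hvN hNc q hq]
      simpa using hvD.2
  -- step ii : f is constant on W
  have hWconst : ∀ v ∈ W, f v = f z := const_on_of_locConst hWpre hWloc hzW
  -- step iii : W is relatively closed in the δ-ball
  have hWclosed : ∀ u ∈ closure W ∩ ball p δ, u ∈ W := by
    rintro u ⟨hucl, hub⟩
    have hnb : (𝓝[W] u).NeBot := mem_closure_iff_nhdsWithin_neBot.mp hucl
    have hWΩ : W ⊆ Ω := fun a hvv => hδΩ (hWD hvv).1
    have h1 : Filter.Tendsto f (𝓝[W] u) (𝓝 (f u)) :=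
      ((hf.continuousWithinAt (hδΩ hub)).mono hWΩ).tendsto
    have h2 : Filter.Tendsto f (𝓝[W] u) (𝓝 (f z)) := by
      refine Filter.Tendsto.congr' ?_ tendsto_const_nhds
      filter_upwards [eventually_nhdsWithin_of_forall hWconst] with a ha' using ha'.symm
    have hfu : f u = f z := tendsto_nhds_unique h1 h2
    have huD : u ∈ D := ⟨hub, by
      simp only [mem_preimage, mem_compl_iff, mem_singleton_iff, hfu]
      simpa using hzD.2⟩
    have hins : insert u W ⊆ W :=
      IsPreconnected.subset_connectedComponentIn
        (hWpre.subset_closure (subset_insert u W) (insert_subset hucl subset_closure))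
        (mem_insert_of_mem u hzW) (insert_subset huD hWD)
    exact hins (mem_insert u W)
  -- step iv : W is all of the δ-ball
  have hcov : ball p δ ⊆ W ∪ (closure W)ᶜ := by
    intro a hab
    by_cases hacl : a ∈ closure W
    · exact Or.inl (hWclosed a ⟨hacl, hab⟩)
    · exact Or.inr hacl
  have hdisj : ¬ (ball p δ ∩ (W ∩ (closure W)ᶜ)).Nonempty := by
    rintro ⟨a, -, haW, hac⟩
    exact hac (subset_closure haW)
  have hright : ¬ (ball p δ ∩ (closure W)ᶜ).Nonempty := fun hn =>
    hdisj ((convex_ball p δ).isPreconnected W (closure W)ᶜ hWo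
      isClosed_closure.isOpen_compl hcov ⟨z, hz, hzW⟩ hn)
  have hsub : ball p δ ⊆ W := by
    intro a hab
    refine hWclosed a ⟨?_, hab⟩
    by_contra hac
    exact hright ⟨a, hab, hac⟩
  have : f p = f z := hWconst p (hsub (mem_ball_self hδ))
  exact (by simpa using hzD.2 : ¬ f z = f p) this.symm

/-- If the chord of a unit-direction line inside `ball p ε` through a point `w` near `p`
avoids the line through `p` with direction `d`, then the directions are nearly parallel. -/
lemma avoid_line_det {p w d e : Eu 2} {ε δ : ℝ} (hd : d ≠ 0) (he1 : ‖e‖ = 1)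
    (hδ0 : 0 < δ) (hδε : δ ≤ ε / 2) (hw : ‖w - p‖ < δ)
    (havoid : ∀ q ∈ lineThru w e ∩ ball p ε, q ∉ lineThru p d) :
    |det2 d e| * (ε / 2) ≤ ‖d‖ * δ := by
  have hε : 0 < ε := by linarith
  set B := det2 d e with hB
  set A := det2 d (w - p) with hA
  by_cases hB0 : B = 0
  · rw [hB0, abs_zero, zero_mul]
    positivity
  · set t := -A / B with ht
    set q := w + t • e with hq
    have hqline : q ∈ lineThru w e := ⟨t, rfl⟩
    have hqd : q ∈ lineThru p d := by
      rw [mem_lineThru_iff hd]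
      have : q - p = (w - p) + t • e := by rw [hq]; abel
      rw [this, det2_add_right, det2_smul_right, ← hA, ← hB, ht]
      field_simp
      ring
    have hqout : q ∉ ball p ε := fun hqb => havoid q ⟨hqline, hqb⟩ hqd
    have hqp : ε ≤ ‖q - p‖ := by
      by_contra hc
      exact hqout (by simpa [mem_ball, dist_eq_norm] using lt_of_not_ge hc)
    have htri : ‖q - p‖ ≤ ‖w - p‖ + |t| := by
      have : q - p = (w - p) + t • e := by rw [hq]; abel
      rw [this]
      calc ‖(w - p) + t • e‖ ≤ ‖w - p‖ + ‖t • e‖ := norm_add_le _ _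
        _ = ‖w - p‖ + |t| := by rw [norm_smul, he1, mul_one, Real.norm_eq_abs]
    have htlb : ε - δ ≤ |t| := by linarith [lt_of_lt_of_le hw (le_refl δ)]
    have hAle : |A| ≤ ‖d‖ * δ := by
      calc |A| ≤ ‖d‖ * ‖w - p‖ := abs_det2_le d (w - p)
        _ ≤ ‖d‖ * δ := by
          have := norm_nonneg d
          nlinarith
    have htval : |t| = |A| / |B| := by rw [ht, abs_div, abs_neg]
    have hBpos : 0 < |B| := abs_pos.mpr hB0
    have : (ε - δ) * |B| ≤ |A| := by
      rw [htval] at htlb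
      calc (ε - δ) * |B| ≤ (|A| / |B|) * |B| := by nlinarith
        _ = |A| := by field_simp
    calc |B| * (ε / 2) ≤ |B| * (ε - δ) := by nlinarith
      _ = (ε - δ) * |B| := mul_comm _ _
      _ ≤ |A| := this
      _ ≤ ‖d‖ * δ := hAle

/-- Geometry for the two-crossing-lines case. -/
lemma geomB {p : Eu 2} {ε : ℝ} (hε : 0 < ε) {d d' : Eu 2} (hΔ : det2 d d' ≠ 0) :
    ∃ δ : ℝ, 0 < δ ∧ δ < ε ∧ ∀ w ∈ ball p δ, ∀ e : Eu 2, e ≠ 0 →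
      (∀ q ∈ lineThru w e ∩ ball p ε, q ∉ lineThru p d ∧ q ∉ lineThru p d') → False := by
  have hd : d ≠ 0 := fun h => hΔ (by simp [det2, h])
  have hd' : d' ≠ 0 := fun h => hΔ (by simp [det2, h])
  have hdn : 0 < ‖d‖ := norm_pos_iff.mpr hd
  have hdn' : 0 < ‖d'‖ := norm_pos_iff.mpr hd'
  set Δ := |det2 d d'| with hΔdef
  have hΔpos : 0 < Δ := abs_pos.mpr hΔ
  refine ⟨min (ε / 2) (ε * Δ / (8 * ‖d‖ * ‖d'‖)), by positivity, ?_, ?_⟩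
  · calc min (ε / 2) (ε * Δ / (8 * ‖d‖ * ‖d'‖)) ≤ ε / 2 := min_le_left _ _
      _ < ε := by linarith
  intro w hw e he havoid
  set δ := min (ε / 2) (ε * Δ / (8 * ‖d‖ * ‖d'‖)) with hδdef
  have hδ0 : 0 < δ := by positivity
  have hδε2 : δ ≤ ε / 2 := min_le_left _ _
  have hδΔ : δ ≤ ε * Δ / (8 * ‖d‖ * ‖d'‖) := min_le_right _ _
  -- normalize direction
  set eu : Eu 2 := ‖e‖⁻¹ • e with heu
  have hen : 0 < ‖e‖ := norm_pos_iff.mpr he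
  have heu1 : ‖eu‖ = 1 := by
    rw [heu, norm_smul, norm_inv, norm_norm, inv_mul_cancel₀ (ne_of_gt hen)]
  have hline : lineThru w e = lineThru w eu :=
    lineThru_rebase (self_mem_lineThru w e) (inv_ne_zero (ne_of_gt hen))
  have hwp : ‖w - p‖ < δ := by rwa [mem_ball, dist_eq_norm] at hw
  have h1 : |det2 d eu| * (ε / 2) ≤ ‖d‖ * δ :=
    avoid_line_det hd heu1 hδ0 hδε2 hwp (fun q hq => (havoid q (by rwa [hline])).1)
  have h2 : |det2 d' eu| * (ε / 2) ≤ ‖d'‖ * δ :=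
    avoid_line_det hd' heu1 hδ0 hδε2 hwp (fun q hq => (havoid q (by rwa [hline])).2)
  -- decomposition identity
  have hdec : det2 d d' • eu = det2 eu d' • d + det2 d eu • d' := by
    refine PiLp.ext fun i => ?_
    fin_cases i <;>
      simp only [Fin.isValue, Fin.mk_zero, Fin.mk_one, det2, PiLp.add_apply, PiLp.smul_apply,
        smul_eq_mul] <;> ring
  have hnorm : Δ ≤ |det2 eu d'| * ‖d‖ + |det2 d eu| * ‖d'‖ := by
    calc Δ = ‖det2 d d' • eu‖ := by
          rw [norm_smul, heu1, mul_one, Real.norm_eq_abs]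
      _ = ‖det2 eu d' • d + det2 d eu • d'‖ := by rw [hdec]
      _ ≤ ‖det2 eu d' • d‖ + ‖det2 d eu • d'‖ := norm_add_le _ _
      _ = |det2 eu d'| * ‖d‖ + |det2 d eu| * ‖d'‖ := by
          rw [norm_smul, norm_smul, Real.norm_eq_abs, Real.norm_eq_abs]
  have hswap : |det2 eu d'| = |det2 d' eu| := by rw [det2_swap eu d', abs_neg]
  rw [hswap] at hnorm
  -- combine the inequalities
  have hcomb : Δ * (ε / 2) ≤ 2 * (‖d‖ * ‖d'‖ * δ) := by nlinarith
  have hPpos : 0 < ‖d‖ * ‖d'‖ := by positivity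
  have h3 : 2 * (‖d‖ * ‖d'‖ * δ) ≤ 2 * (‖d‖ * ‖d'‖ * (ε * Δ / (8 * ‖d‖ * ‖d'‖))) := by
    nlinarith
  have h4 : 2 * (‖d‖ * ‖d'‖ * (ε * Δ / (8 * ‖d‖ * ‖d'‖))) = ε * Δ / 4 := by
    field_simp
    ring
  nlinarith

/-- For a unit vector `e`, the distance from `u` to its projection onto the line
through `w` with direction `e` is `|det2 e (u - w)|`. -/
lemma proj_dist {w e u : Eu 2} (he1 : ‖e‖ = 1) :
    ‖w + ((u - w) 0 * e 0 + (u - w) 1 * e 1) • e - u‖ = |det2 e (u - w)| := by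
  have hu : ‖e‖ ^ 2 = 1 := by rw [he1]; norm_num
  rw [norm_sq_two] at hu
  have key : ‖w + ((u - w) 0 * e 0 + (u - w) 1 * e 1) • e - u‖ ^ 2
      = (det2 e (u - w)) ^ 2 := by
    rw [norm_sq_two]
    simp only [det2, PiLp.add_apply, PiLp.sub_apply, PiLp.smul_apply, smul_eq_mul]
    linear_combination (((u 0 - w 0) * e 0 + (u 1 - w 1) * e 1) ^ 2
      - ((u 0 - w 0) ^ 2 + (u 1 - w 1) ^ 2)) * hu
  calc ‖w + ((u - w) 0 * e 0 + (u - w) 1 * e 1) • e - u‖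
      = √(‖w + ((u - w) 0 * e 0 + (u - w) 1 * e 1) • e - u‖ ^ 2) :=
        (Real.sqrt_sq (norm_nonneg _)).symm
    _ = √((det2 e (u - w)) ^ 2) := by rw [key]
    _ = |det2 e (u - w)| := Real.sqrt_sq_eq_abs _

/-- Geometry for the locally-constant-ball case. -/
lemma geomA {p : Eu 2} {ε r s : ℝ} (hε : 0 < ε) {d : Eu 2} (hd1 : ‖d‖ = 1)
    (hs0 : 0 < s) (hsε : s ≤ ε / 4) (hr0 : 0 < r) (hrε : r ≤ ε / 4) :
    ∃ δ : ℝ, 0 < δ ∧ δ < ε ∧ ∀ w ∈ ball p δ, ∀ e : Eu 2, e ≠ 0 →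
      (∀ q ∈ lineThru w e ∩ ball p ε, q ∉ lineThru p d ∧ q ∉ ball (p + s • d) r) → False := by
  have hd : d ≠ 0 := by intro h; rw [h, norm_zero] at hd1; norm_num at hd1
  refine ⟨min (ε / 4) (r / 4), by positivity, ?_, ?_⟩
  · calc min (ε / 4) (r / 4) ≤ ε / 4 := min_le_left _ _
      _ < ε := by linarith
  intro w hw e he havoid
  set δ := min (ε / 4) (r / 4) with hδdef
  have hδ0 : 0 < δ := by positivity
  have hδε4 : δ ≤ ε / 4 := min_le_left _ _
  have hδr4 : δ ≤ r / 4 := min_le_right _ _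
  have hδε2 : δ ≤ ε / 2 := by linarith
  set eu : Eu 2 := ‖e‖⁻¹ • e with heu
  have hen : 0 < ‖e‖ := norm_pos_iff.mpr he
  have heu1 : ‖eu‖ = 1 := by
    rw [heu, norm_smul, norm_inv, norm_norm, inv_mul_cancel₀ (ne_of_gt hen)]
  have hline : lineThru w e = lineThru w eu :=
    lineThru_rebase (self_mem_lineThru w e) (inv_ne_zero (ne_of_gt hen))
  have hwp : ‖w - p‖ < δ := by rwa [mem_ball, dist_eq_norm] at hw
  have h1 : |det2 d eu| * (ε / 2) ≤ ‖d‖ * δ :=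
    avoid_line_det hd heu1 hδ0 hδε2 hwp (fun q hq => (havoid q (by rwa [hline])).1)
  have hβ : |det2 d eu| ≤ 2 * δ / ε := by
    rw [hd1, one_mul] at h1
    rw [le_div_iff₀ hε]
    nlinarith
  -- the projection of u onto the chord line
  set u : Eu 2 := p + s • d with hu
  set t := (u - w) 0 * eu 0 + (u - w) 1 * eu 1 with htdef
  set q := w + t • eu with hq
  have hqline : q ∈ lineThru w eu := ⟨t, rfl⟩
  have hqu : ‖q - u‖ = |det2 eu (u - w)| := proj_dist heu1
  -- bound |det2 eu (u - w)|
  have hdetbound : |det2 eu (u - w)| ≤ 2 * δ := by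
    have hsplit : u - w = s • d + (p - w) := by rw [hu]; abel
    have : det2 eu (u - w) = s * det2 eu d + det2 eu (p - w) := by
      rw [hsplit, det2_add_right, det2_smul_right]
    rw [this]
    have hb1 : |s * det2 eu d| ≤ s * (2 * δ / ε) := by
      rw [abs_mul, abs_of_pos hs0]
      have : |det2 eu d| = |det2 d eu| := by rw [det2_swap eu d, abs_neg]
      rw [this]
      exact mul_le_mul_of_nonneg_left hβ hs0.le
    have hb2 : |det2 eu (p - w)| ≤ δ := by
      calc |det2 eu (p - w)| ≤ ‖eu‖ * ‖p - w‖ := abs_det2_le _ _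
        _ = ‖p - w‖ := by rw [heu1, one_mul]
        _ = ‖w - p‖ := by rw [norm_sub_rev]
        _ ≤ δ := hwp.le
    calc |s * det2 eu d + det2 eu (p - w)| ≤ |s * det2 eu d| + |det2 eu (p - w)| := abs_add_le _ _
      _ ≤ s * (2 * δ / ε) + δ := add_le_add hb1 hb2
      _ ≤ 2 * δ := by
          have hpos : 0 ≤ 2 * δ / ε := by positivity
          have h5 : s * (2 * δ / ε) ≤ ε / 4 * (2 * δ / ε) :=
            mul_le_mul_of_nonneg_right hsε hpos
          have h6 : ε / 4 * (2 * δ / ε) = δ / 2 := by field_simp; ring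
          linarith
  have hqu2 : ‖q - u‖ ≤ 2 * δ := by rw [hqu]; exact hdetbound
  -- q is in the ball around u and in the ε-ball
  have hqball_u : q ∈ ball u r := by
    rw [mem_ball, dist_eq_norm]
    calc ‖q - u‖ ≤ 2 * δ := hqu2
      _ < r := by linarith
  have hup : ‖u - p‖ = s := by
    rw [hu]; simp only [add_sub_cancel_left]
    rw [norm_smul, hd1, mul_one, Real.norm_eq_abs, abs_of_pos hs0]
  have hqball : q ∈ ball p ε := by
    rw [mem_ball, dist_eq_norm]
    calc ‖q - p‖ = ‖(q - u) + (u - p)‖ := by rw [sub_add_sub_cancel]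
      _ ≤ ‖q - u‖ + ‖u - p‖ := norm_add_le _ _
      _ ≤ 2 * δ + s := by rw [hup]; linarith
      _ < ε := by linarith
  exact (havoid q ⟨by rwa [hline], hqball⟩).2 hqball_u

/-- Lemma B : uniqueness of the constancy line at a non-locally-constant point. -/
lemma uniqueness (hΩo : IsOpen Ω) (hf : ContinuousOn f Ω)
    (ha : ∀ x ∈ Ω, LocConstAt Ω f x ∨ ∃ L : Set (Eu 2), IsLineThrough L x ∧
      ∀ y ∈ connectedComponentIn (L ∩ Ω) x, f y = f x)
    {p : Eu 2} (hp : p ∈ Ω) (hnl : ¬ LocConstAt Ω f p) {d d' : Eu 2}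
    (hd : d ≠ 0) (hd' : d' ≠ 0)
    (hc : ∀ y ∈ connectedComponentIn (lineThru p d ∩ Ω) p, f y = f p)
    (hc' : ∀ y ∈ connectedComponentIn (lineThru p d' ∩ Ω) p, f y = f p) :
    lineThru p d = lineThru p d' := by
  by_cases hΔ : det2 d d' = 0
  · obtain ⟨k, hk⟩ := eq_smul_of_det2_zero hd hΔ
    have hk0 : k ≠ 0 := by rintro rfl; rw [zero_smul] at hk; exact hd' hk
    rw [lineThru_rebase (self_mem_lineThru p d) hk0, ← hk]
  · exfalso
    obtain ⟨ε, hε0, hεΩ⟩ := Metric.isOpen_iff.mp hΩo p hp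
    obtain ⟨δ, hδ0, hδε, hgeom⟩ := geomB hε0 hΔ
    apply hnl
    apply core hf ha hδ0 hδε hεΩ
    intro w hw e he hval
    refine hgeom w hw e he ?_
    intro q hq
    constructor
    · intro hqd
      exact hval q hq
        (chord_const hεΩ (mem_ball_self hε0) (self_mem_lineThru p d) hc q ⟨hqd, hq.2⟩)
    · intro hqd'
      exact hval q hq
        (chord_const hεΩ (mem_ball_self hε0) (self_mem_lineThru p d') hc' q ⟨hqd', hq.2⟩)

/-- Lemma A : the constancy segment of a non-locally-constant point contains no
locally-constant point. -/
lemma part1 (hΩo : IsOpen Ω) (hf : ContinuousOn f Ω)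
    (ha : ∀ x ∈ Ω, LocConstAt Ω f x ∨ ∃ L : Set (Eu 2), IsLineThrough L x ∧
      ∀ y ∈ connectedComponentIn (L ∩ Ω) x, f y = f x)
    {x : Eu 2} (hx : x ∈ Ω) (hnl : ¬ LocConstAt Ω f x) {dL : Eu 2} (hdL : dL ≠ 0)
    (hLc : ∀ y ∈ connectedComponentIn (lineThru x dL ∩ Ω) x, f y = f x) :
    ∀ w ∈ connectedComponentIn (lineThru x dL ∩ Ω) x, ¬ LocConstAt Ω f w := by
  intro w hw hwl
  have hwx : w ≠ x := fun h => hnl (h ▸ hwl)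
  set v := w - x with hv
  have hvne : v ≠ 0 := sub_ne_zero.mpr hwx
  have hvn : 0 < ‖v‖ := norm_pos_iff.mpr hvne
  -- rebase the line to direction v
  have hwL : w ∈ lineThru x dL := (connectedComponentIn_subset _ _ hw).1
  obtain ⟨tw, htw⟩ := hwL
  have htw0 : tw ≠ 0 := by
    rintro rfl; rw [zero_smul, add_zero] at htw; exact hwx htw
  have hveq : v = tw • dL := by rw [hv, htw]; abel
  have hLv : lineThru x dL = lineThru x v := by
    rw [lineThru_rebase (self_mem_lineThru x dL) htw0, ← hveq]
  rw [hLv] at hLc hw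
  have hxc : x ∈ connectedComponentIn (lineThru x v ∩ Ω) x :=
    mem_connectedComponentIn ⟨self_mem_lineThru x v, hx⟩
  -- parametrize the line
  set lam : Eu 2 → ℝ := fun z => (inner ℝ (z - x) v : ℝ) / ‖v‖ ^ 2 with hlam
  have hlam_cont : Continuous lam :=
    ((continuous_id.sub continuous_const).inner continuous_const).div_const _
  have hlam_line : ∀ t : ℝ, lam (x + t • v) = t := by
    intro t
    have h1 : x + t • v - x = t • v := by abel
    rw [hlam]
    simp only [h1, real_inner_smul_left, real_inner_self_eq_norm_sq]
    field_simp
  set T : Set ℝ := {t : ℝ | x + t • v ∈ connectedComponentIn (lineThru x v ∩ Ω) x} with hT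
  have hTpre : IsPreconnected T := by
    have hTeq : T = lam '' connectedComponentIn (lineThru x v ∩ Ω) x := by
      ext t
      constructor
      · intro ht; exact ⟨x + t • v, ht, hlam_line t⟩
      · rintro ⟨q, hq, rfl⟩
        obtain ⟨t', rfl⟩ := (connectedComponentIn_subset _ _ hq).1
        rw [mem_setOf_eq, hlam_line t']
        exact hq
    rw [hTeq]
    exact isPreconnected_connectedComponentIn.image lam hlam_cont.continuousOn
  have e0 : x + (0 : ℝ) • v = x := by simp
  have e1 : x + (1 : ℝ) • v = w := by rw [one_smul, hv]; abel
  have h01 : Icc (0 : ℝ) 1 ⊆ T := by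
    apply hTpre.Icc_subset
    · rw [mem_setOf_eq, e0]; exact hxc
    · rw [mem_setOf_eq, e1]; exact hw
  -- the last non-locally-constant point on the segment
  set S : Set ℝ := {t ∈ Icc (0 : ℝ) 1 | ¬ LocConstAt Ω f (x + t • v)} with hS
  have hγ : Continuous fun t : ℝ => x + t • v :=
    continuous_const.add (continuous_id.smul continuous_const)
  have hScl : IsClosed S := by
    have : S = Icc (0 : ℝ) 1 ∩ (fun t : ℝ => x + t • v) ⁻¹' {y | LocConstAt Ω f y}ᶜ := by
      ext t; rfl
    rw [this]
    exact isClosed_Icc.inter (isOpen_setOf_locConstAt.isClosed_compl.preimage hγ)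
  have hS0 : (0 : ℝ) ∈ S := ⟨⟨le_refl _, zero_le_one⟩, by rw [e0]; exact hnl⟩
  have hSb : BddAbove S := ⟨1, fun t ht => ht.1.2⟩
  set t0 := sSup S with ht0def
  have ht0 : t0 ∈ S := hScl.csSup_mem ⟨0, hS0⟩ hSb
  set p := x + t0 • v with hpdef
  have hpnl : ¬ LocConstAt Ω f p := ht0.2
  have hpcomp : p ∈ connectedComponentIn (lineThru x v ∩ Ω) x := h01 ht0.1
  have hpΩ : p ∈ Ω := (connectedComponentIn_subset _ _ hpcomp).2
  have hfp : f p = f x := hLc p hpcomp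
  have ht0lt : t0 < 1 := by
    rcases lt_or_eq_of_le ht0.1.2 with h | h
    · exact h
    · exfalso; apply hpnl; rw [hpdef, h, e1]; exact hwl
  have hup : ∀ t : ℝ, t0 < t → t ≤ 1 → LocConstAt Ω f (x + t • v) := by
    intro t h1 h2
    by_contra hcl
    exact absurd (le_csSup hSb ⟨⟨le_trans ht0.1.1 h1.le, h2⟩, hcl⟩) (not_le.mpr h1)
  -- set up the ball and the nearby locally-constant point
  obtain ⟨ε, hε0, hεΩ⟩ := Metric.isOpen_iff.mp hΩo p hpΩ
  set du : Eu 2 := ‖v‖⁻¹ • v with hdu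
  have hdu1 : ‖du‖ = 1 := by
    rw [hdu, norm_smul, norm_inv, norm_norm, inv_mul_cancel₀ (ne_of_gt hvn)]
  set ts := min 1 (t0 + ε / (8 * ‖v‖)) with hts_def
  have hts : t0 < ts := lt_min ht0lt (lt_add_of_pos_right t0 (by positivity))
  have hts1 : ts ≤ 1 := min_le_left _ _
  set s := (ts - t0) * ‖v‖ with hsdef
  have hs0 : 0 < s := mul_pos (by linarith) hvn
  have hsε : s ≤ ε / 4 := by
    have h1 : ts - t0 ≤ ε / (8 * ‖v‖) := by
      have := min_le_right 1 (t0 + ε / (8 * ‖v‖))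
      linarith [this.trans_eq (rfl : t0 + ε / (8 * ‖v‖) = t0 + ε / (8 * ‖v‖))]
    have h2 : (ts - t0) * ‖v‖ ≤ (ε / (8 * ‖v‖)) * ‖v‖ :=
      mul_le_mul_of_nonneg_right h1 hvn.le
    have h3 : (ε / (8 * ‖v‖)) * ‖v‖ = ε / 8 := by field_simp
    rw [hsdef]; rw [h3] at h2; linarith
  set u : Eu 2 := x + ts • v with hudef
  have huloc : LocConstAt Ω f u := hup ts hts hts1
  have hucomp : u ∈ connectedComponentIn (lineThru x v ∩ Ω) x :=
    h01 ⟨le_trans ht0.1.1 hts.le, hts1⟩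
  have hfu : f u = f x := hLc u hucomp
  have hueq : u = p + s • du := by
    have hss : s • du = (ts - t0) • v := by
      rw [hsdef, hdu, smul_smul]
      congr 1
      field_simp
    rw [hudef, hpdef, hss]
    module
  -- radius of constancy around u
  obtain ⟨U, hU, hUΩ, hUc⟩ := huloc
  obtain ⟨r0, hr00, hr0U⟩ := Metric.mem_nhds_iff.mp hU
  set r := min r0 (ε / 4) with hrdef
  have hr0 : 0 < r := lt_min hr00 (by positivity)
  have hrε : r ≤ ε / 4 := min_le_right _ _
  have hrc : ∀ q ∈ ball u r, f q = f x := fun q hq => by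
    rw [hUc q (hr0U (ball_subset_ball (min_le_left _ _) hq)), hfu]
  -- constancy on the chord through p
  have hlp : lineThru x v = lineThru p du := by
    rw [lineThru_rebase (⟨t0, hpdef⟩ : p ∈ lineThru x v) (inv_ne_zero (ne_of_gt hvn)), hdu]
  have hcc : connectedComponentIn (lineThru p du ∩ Ω) p
      = connectedComponentIn (lineThru x v ∩ Ω) x := by
    rw [← hlp]
    exact (connectedComponentIn_eq hpcomp).symm
  have hc_p : ∀ y ∈ connectedComponentIn (lineThru p du ∩ Ω) p, f y = f p := by
    intro y hy
    rw [hfp]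
    exact hLc y (hcc ▸ hy)
  have hKc : ∀ q ∈ lineThru p du ∩ ball p ε, f q = f p :=
    chord_const hεΩ (mem_ball_self hε0) (self_mem_lineThru p du) hc_p
  -- apply the geometry and the core lemma
  obtain ⟨δ, hδ0, hδε, hgeom⟩ := geomA hε0 hdu1 hs0 hsε hr0 hrε
  apply hpnl
  apply core hf ha hδ0 hδε hεΩ
  intro w' hw' e he hval
  refine hgeom w' hw' e he ?_
  intro q hq
  constructor
  · intro hqd
    exact hval q hq (hKc q ⟨hqd, hq.2⟩)
  · intro hqb
    apply hval q hq
    rw [← hueq] at hqb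
    rw [hrc q hqb, ← hfp]

end StmtTwo

open StmtTwo in
theorem stmt_2 {m : ℕ} (Ω : Set (Eu 2)) (hΩo : IsOpen Ω)
    (f : Eu 2 → Eu m) (hf : ContinuousOn f Ω)
    (ha : ∀ x ∈ Ω, LocConstAt Ω f x ∨
      ∃ L : Set (Eu 2), IsLineThrough L x ∧
        ∀ y ∈ connectedComponentIn (L ∩ Ω) x, f y = f x) :
    (∀ x ∈ Ω, ¬ LocConstAt Ω f x →
      ∀ L : Set (Eu 2), IsLineThrough L x →
        (∀ y ∈ connectedComponentIn (L ∩ Ω) x, f y = f x) →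
        connectedComponentIn (L ∩ Ω) x ⊆ Ω \ {z | LocConstAt Ω f z}) ∧
    (∀ y ∈ Ω, ∀ z ∈ Ω, ¬ LocConstAt Ω f y → ¬ LocConstAt Ω f z →
      ∀ Ly Lz : Set (Eu 2), IsLineThrough Ly y → IsLineThrough Lz z →
        (∀ w ∈ connectedComponentIn (Ly ∩ Ω) y, f w = f y) →
        (∀ w ∈ connectedComponentIn (Lz ∩ Ω) z, f w = f z) →
        connectedComponentIn (Ly ∩ Ω) y ∩ connectedComponentIn (Lz ∩ Ω) z = ∅ ∨
          connectedComponentIn (Ly ∩ Ω) y = connectedComponentIn (Lz ∩ Ω) z) := by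
  have hpart1 : ∀ x ∈ Ω, ¬ LocConstAt Ω f x →
      ∀ L : Set (Eu 2), IsLineThrough L x →
        (∀ y ∈ connectedComponentIn (L ∩ Ω) x, f y = f x) →
        connectedComponentIn (L ∩ Ω) x ⊆ Ω \ {z | LocConstAt Ω f z} := by
    intro x hx hnl L hL hLc w hw
    obtain ⟨hxL, dL, hdL, rfl⟩ := hL
    exact ⟨(connectedComponentIn_subset _ _ hw).2,
      fun h => part1 hΩo hf ha hx hnl hdL hLc w hw h⟩
  refine ⟨hpart1, ?_⟩
  intro y hy z hz hnly hnlz Ly Lz hLy hLz hcy hcz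
  by_cases hint : connectedComponentIn (Ly ∩ Ω) y ∩ connectedComponentIn (Lz ∩ Ω) z = ∅
  · exact Or.inl hint
  right
  obtain ⟨p, hpy, hpz⟩ := nonempty_iff_ne_empty.mpr hint
  have hpΩ : p ∈ Ω := (connectedComponentIn_subset _ _ hpy).2
  have hpnl : ¬ LocConstAt Ω f p := fun h => (hpart1 y hy hnly Ly hLy hcy hpy).2 h
  obtain ⟨hyLy, dy, hdy, rfl⟩ := hLy
  obtain ⟨hzLz, dz, hdz, rfl⟩ := hLz
  have hpLy : p ∈ lineThru y dy := (connectedComponentIn_subset _ _ hpy).1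
  have hpLz : p ∈ lineThru z dz := (connectedComponentIn_subset _ _ hpz).1
  have hLyp : lineThru y dy = lineThru p dy := by
    rw [lineThru_rebase hpLy (one_ne_zero : (1:ℝ) ≠ 0), one_smul]
  have hLzp : lineThru z dz = lineThru p dz := by
    rw [lineThru_rebase hpLz (one_ne_zero : (1:ℝ) ≠ 0), one_smul]
  have hfpy : f p = f y := hcy p hpy
  have hfpz : f p = f z := hcz p hpz
  have hccy : connectedComponentIn (lineThru y dy ∩ Ω) p
      = connectedComponentIn (lineThru y dy ∩ Ω) y := (connectedComponentIn_eq hpy).symm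
  have hccz : connectedComponentIn (lineThru z dz ∩ Ω) p
      = connectedComponentIn (lineThru z dz ∩ Ω) z := (connectedComponentIn_eq hpz).symm
  have hcp_y : ∀ q ∈ connectedComponentIn (lineThru p dy ∩ Ω) p, f q = f p := by
    intro q hq
    rw [← hLyp] at hq
    rw [hfpy]
    exact hcy q (hccy ▸ hq)
  have hcp_z : ∀ q ∈ connectedComponentIn (lineThru p dz ∩ Ω) p, f q = f p := by
    intro q hq
    rw [← hLzp] at hq
    rw [hfpz]
    exact hcz q (hccz ▸ hq)
  have huniq : lineThru p dy = lineThru p dz :=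
    uniqueness hΩo hf ha hpΩ hpnl hdy hdz hcp_y hcp_z
  have hLL : lineThru y dy = lineThru z dz := by rw [hLyp, huniq, ← hLzp]
  calc connectedComponentIn (lineThru y dy ∩ Ω) y
      = connectedComponentIn (lineThru y dy ∩ Ω) p := connectedComponentIn_eq hpy
    _ = connectedComponentIn (lineThru z dz ∩ Ω) p := by rw [hLL]
    _ = connectedComponentIn (lineThru z dz ∩ Ω) z := (connectedComponentIn_eq hpz).symm
end
end

section
/- Let U ⊂ ℝ be a bounded open interval, 0 < α < 1, f ∈ L¹(U), and suppose that for every ψ ∈ W^{1,1}_0(I), for every open subinterval I ⊂ U, |∫_I f ψ'| ≤ ‖ψ‖_{L¹}^α ‖ψ'‖_{L¹}^{1−α}. Then f (has a representative that) is α-Hölder continuous on U with [f]_{0,α;U} ≤ 4. -/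
noncomputable section
open Set MeasureTheory
open Filter Metric Topology

private lemma intInd (u v c : ℝ) (S : Set ℝ) :
    ∫ t in S, (Ioo u v).indicator (fun _ => c) t =
      (volume (S ∩ Ioo u v)).toReal * c := by
  rw [setIntegral_indicator measurableSet_Ioo, setIntegral_const, smul_eq_mul]
  rfl

private lemma intIndMul (f : ℝ → ℝ) (u v c : ℝ) (S : Set ℝ) (h : Ioo u v ⊆ S) :
    ∫ t in S, f t * (Ioo u v).indicator (fun _ => c) t = (∫ t in Ioo u v, f t) * c := by
  have e : ∀ t, f t * (Ioo u v).indicator (fun _ => c) t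
      = (Ioo u v).indicator (fun t => f t * c) t := by
    intro t; by_cases ht : t ∈ Ioo u v <;> simp [ht]
  simp_rw [e]
  rw [setIntegral_indicator measurableSet_Ioo, inter_eq_self_of_subset_right h,
    integral_mul_const]

private lemma indInt (u v c : ℝ) :
    Integrable ((Ioo u v).indicator (fun _ => c)) volume := by
  refine (integrable_indicator_iff measurableSet_Ioo).2 ?_
  exact integrableOn_const (by rw [Real.volume_Ioo]; exact ENNReal.ofReal_ne_top)

private theorem key_osc (a b : ℝ) (α : ℝ) (hα0 : 0 < α) (hα1 : α < 1)
    (f : ℝ → ℝ) (hf : IntegrableOn f (Set.Ioo a b))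
    (H : ∀ a' b' : ℝ, a ≤ a' → b' ≤ b → a' < b' →
      ∀ g : ℝ → ℝ, IntegrableOn g (Set.Ioo a' b') →
        (∫ s in Set.Ioo a' b', g s) = 0 →
        |∫ t in Set.Ioo a' b', f t * g t| ≤
          (∫ t in Set.Ioo a' b', |∫ s in Set.Ioo a' t, g s|) ^ α *
            (∫ t in Set.Ioo a' b', |g t|) ^ (1 - α))
    (x y r s : ℝ) (hr : 0 < r) (hs : 0 < s)
    (hx1 : a ≤ x - r) (hx2 : x + r ≤ b) (hy1 : a ≤ y - s) (hy2 : y + s ≤ b) :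
    |(2*r)⁻¹ * (∫ t in Ioo (x-r) (x+r), f t) - (2*s)⁻¹ * ∫ t in Ioo (y-s) (y+s), f t| ≤
      2 * (|x - y| + 2 * max r s) ^ α := by
  set a' := min (x-r) (y-s) with ha'def
  set b' := max (x+r) (y+s) with hb'def
  have ha' : a ≤ a' := le_min hx1 hy1
  have hb' : b' ≤ b := max_le hx2 hy2
  have hab' : a' < b' :=
    lt_of_le_of_lt (min_le_left _ _) (lt_of_lt_of_le (by linarith) (le_max_left _ _))
  have hJ : Ioo (x-r) (x+r) ⊆ Ioo a' b' := Ioo_subset_Ioo (min_le_left _ _) (le_max_left _ _)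
  have hK : Ioo (y-s) (y+s) ⊆ Ioo a' b' := Ioo_subset_Ioo (min_le_right _ _) (le_max_right _ _)
  have hJab : Ioo (x-r) (x+r) ⊆ Ioo a b := Ioo_subset_Ioo hx1 hx2
  have hKab : Ioo (y-s) (y+s) ⊆ Ioo a b := Ioo_subset_Ioo hy1 hy2
  set g : ℝ → ℝ := fun t => (Ioo (x-r) (x+r)).indicator (fun _ => (2*r)⁻¹) t
      - (Ioo (y-s) (y+s)).indicator (fun _ => (2*s)⁻¹) t with hgdef
  have hgint : Integrable g volume := (indInt _ _ _).sub (indInt _ _ _)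
  have volJ : volume (Ioo (x-r) (x+r)) = ENNReal.ofReal (2*r) := by
    rw [Real.volume_Ioo]; congr 1; ring
  have volK : volume (Ioo (y-s) (y+s)) = ENNReal.ofReal (2*s) := by
    rw [Real.volume_Ioo]; congr 1; ring
  -- mean zero
  have hg0 : (∫ t in Set.Ioo a' b', g t) = 0 := by
    rw [hgdef]
    rw [integral_sub ((indInt _ _ _).integrableOn) ((indInt _ _ _).integrableOn)]
    rw [intInd, intInd, inter_eq_self_of_subset_right hJ, inter_eq_self_of_subset_right hK,
      volJ, volK, ENNReal.toReal_ofReal (by linarith), ENNReal.toReal_ofReal (by linarith)]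
    field_simp
    norm_num
  -- LHS identification
  have hLHS : (∫ t in Set.Ioo a' b', f t * g t)
      = (∫ t in Ioo (x-r) (x+r), f t) * (2*r)⁻¹ - (∫ t in Ioo (y-s) (y+s), f t) * (2*s)⁻¹ := by
    have e : ∀ t, f t * g t = f t * (Ioo (x-r) (x+r)).indicator (fun _ => (2*r)⁻¹) t
        - f t * (Ioo (y-s) (y+s)).indicator (fun _ => (2*s)⁻¹) t := by
      intro t; rw [hgdef]; ring
    simp_rw [e]
    have i1 : Integrable ((Ioo (x-r) (x+r)).indicator (fun t => f t * (2*r)⁻¹)) volume :=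
      (integrable_indicator_iff measurableSet_Ioo).2 ((hf.mono_set hJab).mul_const _)
    have i2 : Integrable ((Ioo (y-s) (y+s)).indicator (fun t => f t * (2*s)⁻¹)) volume :=
      (integrable_indicator_iff measurableSet_Ioo).2 ((hf.mono_set hKab).mul_const _)
    have e1 : ∀ t, f t * (Ioo (x-r) (x+r)).indicator (fun _ => (2*r)⁻¹) t
        = (Ioo (x-r) (x+r)).indicator (fun t => f t * (2*r)⁻¹) t := by
      intro t; by_cases ht : t ∈ Ioo (x-r) (x+r) <;> simp [ht]
    have e2 : ∀ t, f t * (Ioo (y-s) (y+s)).indicator (fun _ => (2*s)⁻¹) t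
        = (Ioo (y-s) (y+s)).indicator (fun t => f t * (2*s)⁻¹) t := by
      intro t; by_cases ht : t ∈ Ioo (y-s) (y+s) <;> simp [ht]
    simp_rw [e1, e2]
    rw [integral_sub i1.integrableOn i2.integrableOn]
    simp_rw [← e1, ← e2]
    rw [intIndMul f _ _ _ _ hJ, intIndMul f _ _ _ _ hK]
  -- primitive bound
  have primEq : ∀ t : ℝ, (∫ u in Ioo a' t, g u) = ∫ u in Ioc a' t, g u := fun t =>
    (integral_Ioc_eq_integral_Ioo).symm
  have primCont : ContinuousOn (fun t => ∫ u in Ioc a' t, g u) (Icc a' b') :=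
    intervalIntegral.continuousOn_primitive hgint.integrableOn
  have primBdd : ∀ t ∈ Ioo a' b', |∫ u in Ioo a' t, g u| ≤ 1 := by
    intro t ht
    have e : (∫ u in Ioo a' t, g u)
        = (volume (Ioo a' t ∩ Ioo (x-r) (x+r))).toReal * (2*r)⁻¹
          - (volume (Ioo a' t ∩ Ioo (y-s) (y+s))).toReal * (2*s)⁻¹ := by
      rw [hgdef]
      rw [integral_sub ((indInt _ _ _).integrableOn) ((indInt _ _ _).integrableOn),
        intInd, intInd]
    have hP1 : (volume (Ioo a' t ∩ Ioo (x-r) (x+r))).toReal * (2*r)⁻¹ ≤ 1 := by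
      have hv : (volume (Ioo a' t ∩ Ioo (x-r) (x+r))).toReal ≤ 2*r := by
        refine ENNReal.toReal_le_of_le_ofReal (by linarith) ?_
        rw [← volJ]; exact measure_mono inter_subset_right
      calc (volume (Ioo a' t ∩ Ioo (x-r) (x+r))).toReal * (2*r)⁻¹
          ≤ (2*r) * (2*r)⁻¹ := by
            exact mul_le_mul_of_nonneg_right hv (by positivity)
        _ = 1 := by field_simp
    have hP0 : 0 ≤ (volume (Ioo a' t ∩ Ioo (x-r) (x+r))).toReal * (2*r)⁻¹ := by positivity
    have hQ1 : (volume (Ioo a' t ∩ Ioo (y-s) (y+s))).toReal * (2*s)⁻¹ ≤ 1 := by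
      have hv : (volume (Ioo a' t ∩ Ioo (y-s) (y+s))).toReal ≤ 2*s := by
        refine ENNReal.toReal_le_of_le_ofReal (by linarith) ?_
        rw [← volK]; exact measure_mono inter_subset_right
      calc (volume (Ioo a' t ∩ Ioo (y-s) (y+s))).toReal * (2*s)⁻¹
          ≤ (2*s) * (2*s)⁻¹ := by
            exact mul_le_mul_of_nonneg_right hv (by positivity)
        _ = 1 := by field_simp
    have hQ0 : 0 ≤ (volume (Ioo a' t ∩ Ioo (y-s) (y+s))).toReal * (2*s)⁻¹ := by positivity
    rw [e]
    rw [abs_le]; constructor <;> linarith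
  have primIntAbs : IntegrableOn (fun t => |∫ u in Ioo a' t, g u|) (Ioo a' b') volume := by
    have : IntegrableOn (fun t => |∫ u in Ioc a' t, g u|) (Icc a' b') volume :=
      (primCont.abs).integrableOn_Icc
    simp_rw [← primEq] at this
    exact this.mono_set Ioo_subset_Icc_self
  have hpsi : (∫ t in Set.Ioo a' b', |∫ u in Set.Ioo a' t, g u|) ≤ b' - a' := by
    calc (∫ t in Set.Ioo a' b', |∫ u in Set.Ioo a' t, g u|)
        ≤ ∫ _t in Set.Ioo a' b', (1:ℝ) := by
          refine setIntegral_mono_on primIntAbs (integrableOn_const ?_)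
            measurableSet_Ioo primBdd
          rw [Real.volume_Ioo]; exact ENNReal.ofReal_ne_top
      _ = b' - a' := by
          rw [setIntegral_const, smul_eq_mul, mul_one, measureReal_def, Real.volume_Ioo,
            ENNReal.toReal_ofReal (by linarith)]
  have hgabs : (∫ t in Set.Ioo a' b', |g t|) ≤ 2 := by
    have ptwise : ∀ t, |g t| ≤ (Ioo (x-r) (x+r)).indicator (fun _ => (2*r)⁻¹) t
        + (Ioo (y-s) (y+s)).indicator (fun _ => (2*s)⁻¹) t := by
      intro t
      rw [hgdef]
      refine (abs_sub _ _).trans ?_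
      gcongr <;> rw [abs_of_nonneg] <;>
        first
          | exact le_rfl
          | exact Set.indicator_nonneg (fun _ _ => by positivity) t
    calc (∫ t in Set.Ioo a' b', |g t|)
        ≤ ∫ t in Set.Ioo a' b', ((Ioo (x-r) (x+r)).indicator (fun _ => (2*r)⁻¹) t
            + (Ioo (y-s) (y+s)).indicator (fun _ => (2*s)⁻¹) t) := by
          refine setIntegral_mono hgint.abs.integrableOn
            (((indInt _ _ _).add (indInt _ _ _)).integrableOn) ptwise
      _ = 2 := by
          rw [integral_add ((indInt _ _ _).integrableOn) ((indInt _ _ _).integrableOn),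
            intInd, intInd, inter_eq_self_of_subset_right hJ, inter_eq_self_of_subset_right hK,
            volJ, volK, ENNReal.toReal_ofReal (by linarith), ENNReal.toReal_ofReal (by linarith)]
          field_simp
          norm_num
  have hH := H a' b' ha' hb' hab' g hgint.integrableOn hg0
  have nonneg1 : (0:ℝ) ≤ ∫ t in Set.Ioo a' b', |∫ u in Set.Ioo a' t, g u| :=
    integral_nonneg fun t => abs_nonneg _
  have nonneg2 : (0:ℝ) ≤ ∫ t in Set.Ioo a' b', |g t| := integral_nonneg fun t => abs_nonneg _
  have hRHS : (∫ t in Set.Ioo a' b', |∫ u in Set.Ioo a' t, g u|) ^ α *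
      (∫ t in Set.Ioo a' b', |g t|) ^ (1 - α) ≤ (b' - a') ^ α * 2 := by
    have h1 : (∫ t in Set.Ioo a' b', |∫ u in Set.Ioo a' t, g u|) ^ α ≤ (b' - a') ^ α :=
      Real.rpow_le_rpow nonneg1 hpsi hα0.le
    have h2 : (∫ t in Set.Ioo a' b', |g t|) ^ (1 - α) ≤ (2:ℝ) ^ (1 - α) :=
      Real.rpow_le_rpow nonneg2 hgabs (by linarith)
    have h3 : (2:ℝ) ^ (1 - α) ≤ 2 := by
      calc (2:ℝ) ^ (1 - α) ≤ (2:ℝ) ^ (1:ℝ) :=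
            Real.rpow_le_rpow_of_exponent_le (by norm_num) (by linarith)
        _ = 2 := Real.rpow_one 2
    calc (∫ t in Set.Ioo a' b', |∫ u in Set.Ioo a' t, g u|) ^ α *
        (∫ t in Set.Ioo a' b', |g t|) ^ (1 - α)
        ≤ (b' - a') ^ α * (2:ℝ) ^ (1-α) := by
          exact mul_le_mul h1 h2 (Real.rpow_nonneg nonneg2 _) (Real.rpow_nonneg (by linarith) _)
      _ ≤ (b' - a') ^ α * 2 := by
          exact mul_le_mul_of_nonneg_left h3 (Real.rpow_nonneg (by linarith) _)
  have hwidth : b' - a' ≤ |x - y| + 2 * max r s := by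
    have h1 : b' ≤ max x y + max r s := max_le
      (add_le_add (le_max_left _ _) (le_max_left _ _))
      (add_le_add (le_max_right _ _) (le_max_right _ _))
    have h2 : min x y - max r s ≤ a' := le_min
      (sub_le_sub (min_le_left _ _) (le_max_left _ _))
      (sub_le_sub (min_le_right _ _) (le_max_right _ _))
    have h3 : max x y - min x y = |x - y| := (max_sub_min_eq_abs x y).trans (abs_sub_comm y x)
    linarith
  calc |(2*r)⁻¹ * (∫ t in Ioo (x-r) (x+r), f t) - (2*s)⁻¹ * ∫ t in Ioo (y-s) (y+s), f t|
      = |∫ t in Set.Ioo a' b', f t * g t| := by rw [hLHS,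
          show (∫ t in Ioo (x-r) (x+r), f t) * (2*r)⁻¹ - (∫ t in Ioo (y-s) (y+s), f t) * (2*s)⁻¹
            = (2*r)⁻¹ * (∫ t in Ioo (x-r) (x+r), f t) - (2*s)⁻¹ * ∫ t in Ioo (y-s) (y+s), f t
          from by ring]
    _ ≤ (∫ t in Set.Ioo a' b', |∫ u in Set.Ioo a' t, g u|) ^ α *
          (∫ t in Set.Ioo a' b', |g t|) ^ (1 - α) := hH
    _ ≤ (b' - a') ^ α * 2 := hRHS
    _ ≤ (|x - y| + 2 * max r s) ^ α * 2 := by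
        refine mul_le_mul_of_nonneg_right (Real.rpow_le_rpow (by linarith) hwidth hα0.le) (by norm_num)
    _ = 2 * (|x - y| + 2 * max r s) ^ α := by ring

private def Avg (f : ℝ → ℝ) (x r : ℝ) : ℝ := (2*r)⁻¹ * ∫ t in Ioo (x-r) (x+r), f t

private def seqr (a b x : ℝ) (n : ℕ) : ℝ := min (x - a) (b - x) / 2^(n+1)

private theorem key_osc' (a b : ℝ) (α : ℝ) (hα0 : 0 < α) (hα1 : α < 1)
    (f : ℝ → ℝ) (hf : IntegrableOn f (Set.Ioo a b))
    (H : ∀ a' b' : ℝ, a ≤ a' → b' ≤ b → a' < b' →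
      ∀ g : ℝ → ℝ, IntegrableOn g (Set.Ioo a' b') →
        (∫ s in Set.Ioo a' b', g s) = 0 →
        |∫ t in Set.Ioo a' b', f t * g t| ≤
          (∫ t in Set.Ioo a' b', |∫ s in Set.Ioo a' t, g s|) ^ α *
            (∫ t in Set.Ioo a' b', |g t|) ^ (1 - α))
    (x y r s : ℝ) (hr : 0 < r) (hs : 0 < s)
    (hx1 : a ≤ x - r) (hx2 : x + r ≤ b) (hy1 : a ≤ y - s) (hy2 : y + s ≤ b) :
    |Avg f x r - Avg f y s| ≤ 2 * (|x - y| + 2 * max r s) ^ α :=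
  key_osc a b α hα0 hα1 f hf H x y r s hr hs hx1 hx2 hy1 hy2


/-- One-dimensional version: an `L¹` function on an interval whose distributional
derivative pairs against `W^{1,1}_0` test functions (written as
`ψ t = ∫_{a'}^t g`, `g ∈ L¹`, `∫ g = 0`) with the interpolation bound
`|∫ f ψ'| ≤ ‖ψ‖_{L¹}^α ‖ψ'‖_{L¹}^{1−α}` is `α`-Hölder with seminorm at most `4`. -/
theorem stmt_11 (a b : ℝ) (hab : a < b) (α : ℝ) (hα0 : 0 < α) (hα1 : α < 1)
    (f : ℝ → ℝ) (hf : IntegrableOn f (Set.Ioo a b))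
    (H : ∀ a' b' : ℝ, a ≤ a' → b' ≤ b → a' < b' →
      ∀ g : ℝ → ℝ, IntegrableOn g (Set.Ioo a' b') →
        (∫ s in Set.Ioo a' b', g s) = 0 →
        |∫ t in Set.Ioo a' b', f t * g t| ≤
          (∫ t in Set.Ioo a' b', |∫ s in Set.Ioo a' t, g s|) ^ α *
            (∫ t in Set.Ioo a' b', |g t|) ^ (1 - α)) :
    ∃ ftil : ℝ → ℝ,
      (∀ᵐ t ∂(volume.restrict (Set.Ioo a b)), ftil t = f t) ∧
      ∀ x ∈ Set.Ioo a b, ∀ y ∈ Set.Ioo a b, |ftil x - ftil y| ≤ 4 * |x - y| ^ α := by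
  have key := key_osc' a b α hα0 hα1 f hf H
  have hmin : ∀ x ∈ Ioo a b, 0 < min (x - a) (b - x) := fun x hx =>
    lt_min (by linarith [hx.1]) (by linarith [hx.2])
  have hsq_pos : ∀ x ∈ Ioo a b, ∀ n, 0 < seqr a b x n := by
    intro x hx n
    have := hmin x hx
    unfold seqr; positivity
  have hsq_le : ∀ x ∈ Ioo a b, ∀ n, seqr a b x n ≤ min (x - a) (b - x) := by
    intro x hx n
    unfold seqr
    exact div_le_self (hmin x hx).le (one_le_pow₀ (by norm_num))
  have hsq_left : ∀ x ∈ Ioo a b, ∀ n, a ≤ x - seqr a b x n := by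
    intro x hx n
    have h1 := hsq_le x hx n
    have h2 := min_le_left (x - a) (b - x)
    linarith
  have hsq_right : ∀ x ∈ Ioo a b, ∀ n, x + seqr a b x n ≤ b := by
    intro x hx n
    have h1 := hsq_le x hx n
    have h2 := min_le_right (x - a) (b - x)
    linarith
  have hsq_tendsto0 : ∀ x, Tendsto (seqr a b x) atTop (𝓝 0) := by
    intro x
    have h2 : Tendsto (fun n : ℕ => ((2:ℝ)^(n+1))⁻¹) atTop (𝓝 0) := by
      apply Tendsto.inv_tendsto_atTop
      exact (tendsto_pow_atTop_atTop_of_one_lt (by norm_num : (1:ℝ) < 2)).comp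
        (tendsto_add_atTop_nat 1)
    have h3 := h2.const_mul (min (x - a) (b - x))
    unfold seqr
    simpa [div_eq_mul_inv] using h3
  have hsq_tendsto : ∀ x ∈ Ioo a b, Tendsto (seqr a b x) atTop (𝓝[>] 0) := fun x hx =>
    tendsto_nhdsWithin_of_tendsto_nhds_of_eventually_within _ (hsq_tendsto0 x)
      (Eventually.of_forall fun n => Set.mem_Ioi.2 (hsq_pos x hx n))
  have hρ : ((2:ℝ)⁻¹) ^ α < 1 := Real.rpow_lt_one (by norm_num) (by norm_num) hα0
  have geom : ∀ x ∈ Ioo a b, ∀ n, dist (Avg f x (seqr a b x n)) (Avg f x (seqr a b x (n+1)))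
      ≤ (2 * (min (x - a) (b - x)) ^ α) * (((2:ℝ)⁻¹) ^ α) ^ n := by
    intro x hx n
    have h := key x x (seqr a b x n) (seqr a b x (n+1)) (hsq_pos x hx n) (hsq_pos x hx (n+1))
      (hsq_left x hx n) (hsq_right x hx n) (hsq_left x hx (n+1)) (hsq_right x hx (n+1))
    have hdec : seqr a b x (n+1) ≤ seqr a b x n := by
      unfold seqr
      gcongr
      · exact (hmin x hx).le
      · norm_num
      · omega
    rw [sub_self, abs_zero, max_eq_left hdec] at h
    have e1 : (0:ℝ) + 2 * seqr a b x n = min (x - a) (b - x) * ((2:ℝ)⁻¹)^n := by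
      unfold seqr
      rw [pow_succ]
      field_simp
      rw [mul_assoc, ← mul_pow]; norm_num
    have e2 : 2 * (min (x - a) (b - x) * ((2:ℝ)⁻¹)^n) ^ α
        = (2 * (min (x - a) (b - x)) ^ α) * (((2:ℝ)⁻¹) ^ α) ^ n := by
      rw [Real.mul_rpow (hmin x hx).le (by positivity),
        ← Real.rpow_natCast ((2:ℝ)⁻¹) n, ← Real.rpow_natCast (((2:ℝ)⁻¹) ^ α) n,
        ← Real.rpow_mul (by norm_num : (0:ℝ) ≤ 2⁻¹),
        ← Real.rpow_mul (by norm_num : (0:ℝ) ≤ 2⁻¹), mul_comm (n:ℝ) α]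
      ring
    rw [Real.dist_eq]
    calc |Avg f x (seqr a b x n) - Avg f x (seqr a b x (n+1))|
        ≤ 2 * ((0:ℝ) + 2 * seqr a b x n) ^ α := h
      _ = (2 * (min (x - a) (b - x)) ^ α) * (((2:ℝ)⁻¹) ^ α) ^ n := by rw [e1, e2]
  set ftil : ℝ → ℝ := fun x => limUnder atTop (fun n => Avg f x (seqr a b x n)) with hftil
  have hconv : ∀ x ∈ Ioo a b, Tendsto (fun n => Avg f x (seqr a b x n)) atTop (𝓝 (ftil x)) := by
    intro x hx
    have hc : CauchySeq (fun n => Avg f x (seqr a b x n)) :=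
      cauchySeq_of_le_geometric _ _ hρ (geom x hx)
    obtain ⟨L, hL⟩ := cauchySeq_tendsto_of_complete hc
    have hEq : ftil x = L := hL.limUnder_eq
    rw [hEq]; exact hL
  refine ⟨ftil, ?_, ?_⟩
  · -- a.e. equality
    set F : ℝ → ℝ := (Ioo a b).indicator f with hF
    have hFint : Integrable F volume := (integrable_indicator_iff measurableSet_Ioo).2 hf
    have hleb := IsUnifLocDoublingMeasure.ae_tendsto_average (μ := volume)
      hFint.locallyIntegrable 1
    filter_upwards [ae_restrict_of_ae hleb, ae_restrict_mem measurableSet_Ioo] with t ht htm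
    have havg : ∀ n, (⨍ u in closedBall t (seqr a b t n), F u) = Avg f t (seqr a b t n) := by
      intro n
      rw [setAverage_eq, smul_eq_mul, measureReal_def, Real.volume_closedBall, Real.closedBall_eq_Icc,
        integral_Icc_eq_integral_Ioo, hF, setIntegral_indicator measurableSet_Ioo,
        inter_eq_self_of_subset_left (Ioo_subset_Ioo (hsq_left t htm n) (hsq_right t htm n)),
        ENNReal.toReal_ofReal (by linarith [hsq_pos t htm n])]
      rfl
    have htend : Tendsto (fun n => Avg f t (seqr a b t n)) atTop (𝓝 (F t)) := by
      have h2 := ht (fun _ : ℕ => t) (seqr a b t) (hsq_tendsto t htm)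
        (Eventually.of_forall fun n =>
          mem_closedBall_self (by rw [one_mul]; exact (hsq_pos t htm n).le))
      simpa only [havg] using h2
    have : ftil t = F t := tendsto_nhds_unique (hconv t htm) htend
    rw [this, hF, indicator_of_mem htm]
  · -- Hölder
    intro x hx y hy
    have bound : ∀ n, |Avg f x (seqr a b x n) - Avg f y (seqr a b y n)|
        ≤ 2 * (|x - y| + 2 * max (seqr a b x n) (seqr a b y n)) ^ α := fun n =>
      key x y _ _ (hsq_pos x hx n) (hsq_pos y hy n)
        (hsq_left x hx n) (hsq_right x hx n) (hsq_left y hy n) (hsq_right y hy n)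
    have t1 : Tendsto (fun n => |Avg f x (seqr a b x n) - Avg f y (seqr a b y n)|)
        atTop (𝓝 |ftil x - ftil y|) := ((hconv x hx).sub (hconv y hy)).abs
    have tmax : Tendsto (fun n => max (seqr a b x n) (seqr a b y n)) atTop (𝓝 0) := by
      simpa using (hsq_tendsto0 x).max (hsq_tendsto0 y)
    have tbase : Tendsto (fun n => |x - y| + 2 * max (seqr a b x n) (seqr a b y n))
        atTop (𝓝 (|x - y|)) := by
      have h0 : Tendsto (fun n : ℕ => 2 * max (seqr a b x n) (seqr a b y n)) atTop
          (𝓝 (2 * 0)) := tmax.const_mul 2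
      have h1 : Tendsto (fun _ : ℕ => |x - y|) atTop (𝓝 (|x - y|)) := tendsto_const_nhds
      simpa using h1.add h0
    have t2 : Tendsto (fun n => 2 * (|x - y| + 2 * max (seqr a b x n) (seqr a b y n)) ^ α)
        atTop (𝓝 (2 * |x - y| ^ α)) := by
      have hcont : ContinuousAt (fun u : ℝ => u ^ α) (|x - y|) :=
        Real.continuousAt_rpow_const _ _ (Or.inr hα0.le)
      exact (hcont.tendsto.comp tbase).const_mul 2
    have hle : |ftil x - ftil y| ≤ 2 * |x - y| ^ α := le_of_tendsto_of_tendsto' t1 t2 bound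
    have h4 : 2 * |x - y| ^ α ≤ 4 * |x - y| ^ α := by
      have := Real.rpow_nonneg (abs_nonneg (x - y)) α
      linarith
    linarith
end
end

section
/- Let U ⊂ ℝⁿ be a bounded Lipschitz domain and 0 < α < 1. For f : U → ℝ, the following are equivalent: (i) f ∈ c^{0,α}(Ū), i.e., f is in the closure of C¹(Ū) in the C^{0,α}(Ū) norm; (iii) the modulus of continuity ω_f(r) = sup{ |f(x)−f(y)| : x,y ∈ U, 0<|x−y|≤r } satisfies ω_f(r)/r^α → 0 as r → 0; (iv) lim_{r→0} [f]_{0,α;U|r} = 0. -/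
noncomputable section
open Set Metric Topology

/-- A bounded (weakly) Lipschitz domain: a bounded open set whose closure is
covered by finitely many open sets, each either contained in `U` or flattened
by a bilipschitz chart so that `U` corresponds to one side of a coordinate
hyperplane. -/
def IsWeaklyLipschitzDomain {n : ℕ} (U : Set (Eu n)) : Prop :=
  IsOpen U ∧ Bornology.IsBounded U ∧
  ∃ (N : ℕ) (W : Fin N → Set (Eu n)) (Φ Ψ : Fin N → Eu n → Eu n) (K : NNReal),
    (∀ i, IsOpen (W i)) ∧ (closure U ⊆ ⋃ i, W i) ∧
    ∀ i, W i ⊆ U ∨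
      (LipschitzOnWith K (Φ i) (W i) ∧ LipschitzOnWith K (Ψ i) (Φ i '' W i) ∧
        (∀ x ∈ W i, Ψ i (Φ i x) = x) ∧
        ∃ j : Fin n, ∀ x ∈ W i, (x ∈ U ↔ 0 < Φ i x j))

open MeasureTheory ContinuousLinearMap
open scoped Convolution

/-- Subadditivity of `rpow` with exponent in `(0,1]`, `NNReal` version. -/
lemma nn_rpow_add_le {a b : NNReal} {p : ℝ} (h0 : 0 < p) (h1 : p ≤ 1) :
    (a + b) ^ p ≤ a ^ p + b ^ p := by
  have h := NNReal.rpow_add_rpow_le a b h0 h1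
  simp only [NNReal.rpow_one, one_div_one] at h
  calc (a + b) ^ p ≤ ((a ^ p + b ^ p) ^ (1 / p)) ^ p := NNReal.rpow_le_rpow h h0.le
    _ = a ^ p + b ^ p := by
        rw [← NNReal.rpow_mul, one_div, inv_mul_cancel₀ h0.ne', NNReal.rpow_one]

/-- Subadditivity of `rpow` with exponent in `(0,1]`, real version. -/
lemma real_rpow_add_le {a b p : ℝ} (ha : 0 ≤ a) (hb : 0 ≤ b) (h0 : 0 < p) (h1 : p ≤ 1) :
    (a + b) ^ p ≤ a ^ p + b ^ p := by
  lift a to NNReal using ha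
  lift b to NNReal using hb
  rw [← NNReal.coe_add, ← NNReal.coe_rpow, ← NNReal.coe_rpow, ← NNReal.coe_rpow,
    ← NNReal.coe_add, NNReal.coe_le_coe]
  exact nn_rpow_add_le h0 h1

/-- One can make `L * r ^ β` small by choosing `r` small. -/
lemma exists_small_rpow {L c β : ℝ} (hL : 0 ≤ L) (hc : 0 < c) (hβ : 0 < β) :
    ∃ r : ℝ, 0 < r ∧ r ≤ 1 ∧ L * r ^ β ≤ c := by
  have hD : (0:ℝ) < L + 1 := by linarith
  have hcd : (0:ℝ) < c / (L + 1) := by positivity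
  refine ⟨min 1 ((c / (L + 1)) ^ (1 / β)), lt_min one_pos (Real.rpow_pos_of_pos hcd _),
    min_le_left _ _, ?_⟩
  have hmin0 : (0:ℝ) ≤ min 1 ((c / (L + 1)) ^ (1 / β)) :=
    le_min zero_le_one (Real.rpow_nonneg hcd.le _)
  have h1 : (min 1 ((c / (L + 1)) ^ (1 / β))) ^ β ≤ ((c / (L + 1)) ^ (1 / β)) ^ β :=
    Real.rpow_le_rpow hmin0 (min_le_right _ _) hβ.le
  rw [← Real.rpow_mul hcd.le, one_div_mul_cancel hβ.ne', Real.rpow_one] at h1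
  calc L * (min 1 ((c / (L + 1)) ^ (1 / β))) ^ β ≤ L * (c / (L + 1)) :=
        mul_le_mul_of_nonneg_left h1 hL
    _ ≤ c := by
        rw [mul_div_assoc', div_le_iff₀ hD]
        nlinarith

set_option maxHeartbeats 2000000

/-- Characterization of the little Hölder space `c^{0,α}(Ū)`:
(i) approximability by `C¹` functions in the `C^{0,α}` norm is equivalent to
(iv) the local Hölder modulus tending to `0`, and (iii) `ω_f(r) = o(r^α)` is
also equivalent to (iv). -/
theorem stmt_13 {n : ℕ} (U : Set (Eu n)) (hU : IsWeaklyLipschitzDomain U)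
    (α : ℝ) (hα0 : 0 < α) (hα1 : α < 1) (f : Eu n → ℝ) :
    -- (i) ↔ (iv)
    ((∀ δ > 0, ∃ g : Eu n → ℝ, ContDiff ℝ 1 g ∧ (∀ x ∈ U, |f x - g x| ≤ δ) ∧
        ∀ x ∈ U, ∀ y ∈ U, |(f x - g x) - (f y - g y)| ≤ δ * dist x y ^ α) ↔
      (∀ δ > 0, ∃ r > 0, ∀ x ∈ U, ∀ y ∈ U, dist x y ≤ r →
        |f x - f y| ≤ δ * dist x y ^ α)) ∧
    -- (iii) ↔ (iv)
    ((∀ δ > 0, ∃ r0 > 0, ∀ r : ℝ, 0 < r → r ≤ r0 → ∀ x ∈ U, ∀ y ∈ U,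
        dist x y ≤ r → |f x - f y| ≤ δ * r ^ α) ↔
      (∀ δ > 0, ∃ r > 0, ∀ x ∈ U, ∀ y ∈ U, dist x y ≤ r →
        |f x - f y| ≤ δ * dist x y ^ α)) := by
  obtain ⟨hUopen, hUbd, -⟩ := hU
  have habs0 : ∀ x y : Eu n, x = y → |f x - f y| ≤ 0 := by
    rintro x y rfl; simp
  constructor
  · constructor
    · -- (i) → (iv)
      intro hi δ hδ
      obtain ⟨g, hg, _, hg2⟩ := hi (δ / 2) (by positivity)
      -- a Lipschitz bound for g on a big ball containing U
      obtain ⟨R, hR⟩ := (isBounded_iff_subset_closedBall (0 : Eu n)).1 hUbd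
      set R' : ℝ := max R 0 with hR'def
      have hUR : U ⊆ closedBall (0 : Eu n) R' :=
        hR.trans (closedBall_subset_closedBall (le_max_left _ _))
      obtain ⟨K, hK⟩ := (isCompact_closedBall (0 : Eu n) R').exists_bound_of_continuousOn
        (hg.continuous_fderiv one_ne_zero).continuousOn
      set K' : ℝ := max K 0 with hK'def
      have hK'0 : 0 ≤ K' := le_max_right _ _
      have hglip : ∀ x ∈ U, ∀ y ∈ U, |g x - g y| ≤ K' * dist x y := by
        intro x hx y hy
        have := (convex_closedBall (0 : Eu n) R').norm_image_sub_le_of_norm_fderiv_le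
          (fun z _ => (hg.differentiable one_ne_zero) z)
          (fun z hz => (hK z hz).trans (le_max_left K 0)) (hUR hy) (hUR hx)
        simpa [Real.norm_eq_abs, dist_eq_norm] using this
      obtain ⟨r, hr0, hr1, hrle⟩ := exists_small_rpow hK'0 (half_pos hδ) (by linarith : (0:ℝ) < 1 - α)
      refine ⟨r, hr0, ?_⟩
      intro x hx y hy hdr
      by_cases hxy : x = y
      · exact (habs0 x y hxy).trans (by positivity)
      have hd0 : 0 < dist x y := dist_pos.2 hxy
      have hstep : |f x - f y| ≤ |(f x - g x) - (f y - g y)| + |g x - g y| := by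
        have e : f x - f y = ((f x - g x) - (f y - g y)) + (g x - g y) := by ring
        rw [e]; exact abs_add_le _ _
      have hKd : K' * dist x y ≤ (δ / 2) * dist x y ^ α := by
        have hsplit : dist x y = dist x y ^ α * dist x y ^ (1 - α) := by
          rw [← Real.rpow_add hd0, add_sub_cancel, Real.rpow_one]
        have h1 : dist x y ^ (1 - α) ≤ r ^ (1 - α) :=
          Real.rpow_le_rpow dist_nonneg hdr (by linarith)
        calc K' * dist x y = K' * dist x y ^ (1 - α) * dist x y ^ α := by
              conv_lhs => rw [hsplit]
              ring
          _ ≤ K' * r ^ (1 - α) * dist x y ^ α := by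
              have : K' * dist x y ^ (1 - α) ≤ K' * r ^ (1 - α) :=
                mul_le_mul_of_nonneg_left h1 hK'0
              exact mul_le_mul_of_nonneg_right this (Real.rpow_nonneg dist_nonneg _)
          _ ≤ (δ / 2) * dist x y ^ α :=
              mul_le_mul_of_nonneg_right hrle (Real.rpow_nonneg dist_nonneg _)
      calc |f x - f y| ≤ |(f x - g x) - (f y - g y)| + |g x - g y| := hstep
        _ ≤ (δ / 2) * dist x y ^ α + K' * dist x y := by
            have := hg2 x hx y hy
            have := hglip x hx y hy
            linarith
        _ ≤ (δ / 2) * dist x y ^ α + (δ / 2) * dist x y ^ α := by linarith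
        _ = δ * dist x y ^ α := by ring
    · -- (iv) → (i)
      intro hiv δ hδ
      by_cases hne : U.Nonempty
      swap
      · refine ⟨0, contDiff_const, ?_, ?_⟩ <;>
          · intro x hx
            exact absurd ⟨x, hx⟩ hne
      obtain ⟨x₀, hx₀⟩ := hne
      haveI : Nonempty U := ⟨⟨x₀, hx₀⟩⟩
      -- Step 1: a global oscillation bound on U
      obtain ⟨r₂, hr₂, hosc⟩ := hiv 1 one_pos
      have hcover : closure U ⊆ ⋃ p : U, ball (p : Eu n) r₂ := by
        intro x hx
        obtain ⟨p, hp, hdp⟩ := Metric.mem_closure_iff.1 hx r₂ hr₂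
        exact mem_iUnion.2 ⟨⟨p, hp⟩, mem_ball.2 hdp⟩
      obtain ⟨t, ht⟩ := hUbd.isCompact_closure.elim_finite_subcover _
        (fun p : U => isOpen_ball) hcover
      set B : ℝ := ∑ p ∈ t, |f p| with hBdef
      have hB0 : 0 ≤ B := Finset.sum_nonneg fun _ _ => abs_nonneg _
      have hMabs : ∀ x ∈ U, |f x| ≤ B + r₂ ^ α := by
        intro x hx
        obtain ⟨p, hpt, hpx⟩ := mem_iUnion₂.1 (ht (subset_closure hx))
        have hdist : dist x p ≤ r₂ := (mem_ball.1 hpx).le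
        have h1 : |f x - f p| ≤ 1 * dist x (p : Eu n) ^ α := hosc x hx p p.2 hdist
        have h2 : dist x (p : Eu n) ^ α ≤ r₂ ^ α := Real.rpow_le_rpow dist_nonneg hdist hα0.le
        have h3 : |f (p : Eu n)| ≤ B :=
          Finset.single_le_sum (fun (q : U) _ => abs_nonneg (f q)) hpt
        calc |f x| = |f (p : Eu n) + (f x - f (p : Eu n))| := by congr 1; ring
          _ ≤ |f (p : Eu n)| + |f x - f (p : Eu n)| := abs_add_le _ _
          _ ≤ B + r₂ ^ α := by rw [one_mul] at h1; linarith
      set M : ℝ := 2 * (B + r₂ ^ α) with hMdef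
      have hM0 : 0 ≤ M := by
        have := (abs_nonneg (f x₀)).trans (hMabs x₀ hx₀); linarith
      have hMosc : ∀ x ∈ U, ∀ y ∈ U, |f x - f y| ≤ M := by
        intro x hx y hy
        have h1 := hMabs x hx
        have h2 := hMabs y hy
        have := abs_sub (f x) (f y)
        calc |f x - f y| ≤ |f x| + |f y| := abs_sub _ _
          _ ≤ M := by rw [hMdef]; linarith
      -- Step 2: a concave-type modulus dominating f
      set δ' : ℝ := δ / 4 with hδ'def
      have hδ'0 : 0 < δ' := by positivity
      obtain ⟨r₁, hr₁, hkey⟩ := hiv δ' hδ'0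
      set L : ℝ := M / r₁ with hLdef
      have hL0 : 0 ≤ L := div_nonneg hM0 hr₁.le
      set h : ℝ → ℝ := fun s => δ' * s ^ α + L * s with hhdef
      have hh0 : h 0 = 0 := by simp [hhdef, Real.zero_rpow hα0.ne']
      have hhnonneg : ∀ s : ℝ, 0 ≤ s → 0 ≤ h s := by
        intro s hs
        have := Real.rpow_nonneg hs α
        simp only [hhdef]; positivity
      have hhmono : ∀ s u : ℝ, 0 ≤ s → s ≤ u → h s ≤ h u := by
        intro s u hs hsu
        have h1 : s ^ α ≤ u ^ α := Real.rpow_le_rpow hs hsu hα0.le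
        simp only [hhdef]
        have : L * s ≤ L * u := mul_le_mul_of_nonneg_left hsu hL0
        nlinarith
      have hhsub : ∀ s u : ℝ, 0 ≤ s → 0 ≤ u → h (s + u) ≤ h s + h u := by
        intro s u hs hu
        have := real_rpow_add_le hs hu hα0 hα1.le
        simp only [hhdef]
        nlinarith
      have hhsmall : ∀ c : ℝ, 0 < c → ∃ η : ℝ, 0 < η ∧ ∀ s : ℝ, 0 ≤ s → s ≤ η → h s ≤ c := by
        intro c hc
        obtain ⟨η, hη0, hη1, hηle⟩ := exists_small_rpow (by linarith : (0:ℝ) ≤ δ' + L) hc hα0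
        refine ⟨η, hη0, ?_⟩
        intro s hs0 hsη
        rcases eq_or_lt_of_le hs0 with hs | hs
        · rw [hhdef]; simp [← hs, Real.zero_rpow hα0.ne']; exact hc.le
        have hs1 : s ≤ 1 := hsη.trans hη1
        have h1 : s ≤ s ^ α := by
          have := Real.rpow_le_rpow_of_exponent_ge hs hs1 hα1.le
          rwa [Real.rpow_one] at this
        have h2 : s ^ α ≤ η ^ α := Real.rpow_le_rpow hs0 hsη hα0.le
        calc h s = δ' * s ^ α + L * s := rfl
          _ ≤ (δ' + L) * s ^ α := by nlinarith
          _ ≤ (δ' + L) * η ^ α := by nlinarith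
          _ ≤ c := hηle
      have hdom : ∀ x ∈ U, ∀ y ∈ U, |f x - f y| ≤ h (dist x y) := by
        intro x hx y hy
        rcases le_or_gt (dist x y) r₁ with hle | hlt
        · have := hkey x hx y hy hle
          have hLd : 0 ≤ L * dist x y := mul_nonneg hL0 dist_nonneg
          simp only [hhdef]; linarith
        · have h1 : |f x - f y| ≤ M := hMosc x hx y hy
          have h2 : M ≤ L * dist x y := by
            rw [hLdef, div_mul_eq_mul_div, le_div_iff₀ hr₁]
            nlinarith
          have h3 : 0 ≤ δ' * dist x y ^ α :=
            mul_nonneg hδ'0.le (Real.rpow_nonneg dist_nonneg _)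
          simp only [hhdef]; linarith
      -- Step 3: the extension F of f
      set F : Eu n → ℝ := fun x => ⨅ p : U, (f p + h (dist x p)) with hFdef
      have hbdd : ∀ x : Eu n, BddBelow (range fun p : U => f p + h (dist x p)) := by
        intro x
        refine ⟨f x₀ - M, ?_⟩
        rintro z ⟨p, rfl⟩
        have h1 : |f x₀ - f p| ≤ M := hMosc x₀ hx₀ p p.2
        have h2 : 0 ≤ h (dist x p) := hhnonneg _ dist_nonneg
        have h3 := (abs_le.1 h1).2
        show f x₀ - M ≤ f (p : Eu n) + h (dist x (p : Eu n))
        linarith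
      have hFeq : ∀ x ∈ U, F x = f x := by
        intro x hx
        refine le_antisymm ?_ ?_
        · have := ciInf_le (hbdd x) (⟨x, hx⟩ : U)
          simpa [hh0] using this
        · refine le_ciInf fun p => ?_
          have hub := (abs_le.1 (hdom x hx p p.2)).2
          show f x ≤ f (p : Eu n) + h (dist x (p : Eu n))
          linarith
      have hFmod : ∀ x y : Eu n, |F x - F y| ≤ h (dist x y) := by
        have oneside : ∀ x y : Eu n, F x ≤ F y + h (dist x y) := by
          intro x y
          have : F x - h (dist x y) ≤ F y := by
            refine le_ciInf fun p => ?_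
            show F x - h (dist x y) ≤ f (p : Eu n) + h (dist y (p : Eu n))
            have h1 : F x ≤ f (p : Eu n) + h (dist x (p : Eu n)) := ciInf_le (hbdd x) p
            have h2 : dist x p ≤ dist x y + dist y p := dist_triangle _ _ _
            have h3 : h (dist x p) ≤ h (dist x y) + h (dist y p) :=
              (hhmono _ _ dist_nonneg h2).trans (hhsub _ _ dist_nonneg dist_nonneg)
            linarith
          linarith
        intro x y
        rw [abs_sub_le_iff]
        constructor
        · linarith [oneside x y]
        · have := oneside y x
          rw [dist_comm y x] at this
          linarith
      have hFcont : Continuous F := by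
        rw [Metric.continuous_iff]
        intro b ε hε
        obtain ⟨η, hη0, hηs⟩ := hhsmall (ε / 2) (by positivity)
        refine ⟨η, hη0, fun a hab => ?_⟩
        have h1 : |F a - F b| ≤ h (dist a b) := hFmod a b
        have h2 : h (dist a b) ≤ ε / 2 := hηs _ dist_nonneg hab.le
        rw [Real.dist_eq]
        exact (h1.trans h2).trans_lt (by linarith)
      -- Step 4: choose scales
      obtain ⟨r, hr0, hr1, hrle⟩ := exists_small_rpow hL0 (by positivity : (0:ℝ) < δ / 4)
        (by linarith : (0:ℝ) < 1 - α)
      have hrα : 0 < δ * r ^ α / 2 := by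
        have := Real.rpow_pos_of_pos hr0 α; positivity
      set c : ℝ := min δ (δ * r ^ α / 2) with hcdef
      have hc0 : 0 < c := lt_min hδ hrα
      obtain ⟨η, hη0, hηsm⟩ := hhsmall c hc0
      set ε : ℝ := η with hεdef
      -- Step 5: mollification
      set φ : ContDiffBump (0 : Eu n) := ⟨ε / 2, ε, by positivity, by linarith⟩ with hφdef
      set g : Eu n → ℝ := φ.normed volume ⋆[lsmul ℝ ℝ, volume] F with hgdef
      have hFli : LocallyIntegrable F volume := hFcont.locallyIntegrable
      have hgC1 : ContDiff ℝ 1 g :=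
        φ.hasCompactSupport_normed.contDiff_convolution_left _ φ.contDiff_normed hFli
      have hsup : ∀ x : Eu n, |g x - F x| ≤ c := by
        intro x
        have key : dist (g x) (F x) ≤ c := by
          apply φ.dist_normed_convolution_le hFcont.aestronglyMeasurable
          intro y hy
          have hyx : dist y x ≤ η := by
            have h5 : dist y x < φ.rOut := mem_ball.1 hy
            exact le_of_lt h5
          rw [Real.dist_eq]
          exact (hFmod y x).trans (hηsm _ dist_nonneg hyx)
        rwa [Real.dist_eq] at key
      have hmod : ∀ x y : Eu n, |g x - g y| ≤ h (dist x y) := by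
        intro x y
        have hint : ∀ z : Eu n, Integrable (fun s => φ.normed volume s • F (z - s)) volume := by
          intro z
          apply Continuous.integrable_of_hasCompactSupport
          · exact φ.continuous_normed.smul (hFcont.comp (continuous_const.sub continuous_id))
          · exact φ.hasCompactSupport_normed.smul_right
        have hgx : g x = ∫ s, φ.normed volume s • F (x - s) := convolution_lsmul
        have hgy : g y = ∫ s, φ.normed volume s • F (y - s) := convolution_lsmul
        rw [hgx, hgy, ← integral_sub (hint x) (hint y)]
        have hbound : ∀ s : Eu n,
            ‖φ.normed volume s • F (x - s) - φ.normed volume s • F (y - s)‖ ≤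
              φ.normed volume s * h (dist x y) := by
          intro s
          rw [← smul_sub, norm_smul, Real.norm_eq_abs, Real.norm_eq_abs,
            abs_of_nonneg (φ.nonneg_normed s)]
          have h1 : |F (x - s) - F (y - s)| ≤ h (dist x y) := by
            have := hFmod (x - s) (y - s)
            rwa [dist_sub_right] at this
          exact mul_le_mul_of_nonneg_left h1 (φ.nonneg_normed s)
        have hgint : Integrable (fun s => φ.normed volume s * h (dist x y)) volume :=
          φ.integrable_normed.mul_const _
        have := norm_integral_le_of_norm_le hgint (Filter.Eventually.of_forall hbound)
        rw [Real.norm_eq_abs] at this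
        refine this.trans ?_
        rw [integral_mul_const, φ.integral_normed, one_mul]
      -- Step 6: conclusion
      refine ⟨g, hgC1, ?_, ?_⟩
      · intro x hx
        have h1 : |f x - g x| = |g x - F x| := by rw [hFeq x hx, abs_sub_comm]
        rw [h1]
        exact (hsup x).trans (min_le_left _ _)
      · intro x hx y hy
        have hrw : (f x - g x) - (f y - g y) = (F x - g x) - (F y - g y) := by
          rw [hFeq x hx, hFeq y hy]
        rw [hrw]
        rcases le_or_gt (dist x y) r with hle | hlt
        · -- small scale
          by_cases hxy : x = y
          · subst hxy
            simp only [sub_self, abs_zero]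
            positivity
          have hd0 : 0 < dist x y := dist_pos.2 hxy
          have h1 : |(F x - g x) - (F y - g y)| ≤ |F x - F y| + |g x - g y| := by
            have : (F x - g x) - (F y - g y) = (F x - F y) - (g x - g y) := by ring
            rw [this]
            exact abs_sub _ _
          have h2 : |F x - F y| ≤ h (dist x y) := hFmod x y
          have h3 : |g x - g y| ≤ h (dist x y) := hmod x y
          have hLd : L * dist x y ≤ (δ / 4) * dist x y ^ α := by
            have hsplit : dist x y = dist x y ^ α * dist x y ^ (1 - α) := by
              rw [← Real.rpow_add hd0, add_sub_cancel, Real.rpow_one]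
            have ha : dist x y ^ (1 - α) ≤ r ^ (1 - α) :=
              Real.rpow_le_rpow dist_nonneg hle (by linarith)
            calc L * dist x y = L * dist x y ^ (1 - α) * dist x y ^ α := by
                  conv_lhs => rw [hsplit]
                  ring
              _ ≤ L * r ^ (1 - α) * dist x y ^ α := by
                  have : L * dist x y ^ (1 - α) ≤ L * r ^ (1 - α) :=
                    mul_le_mul_of_nonneg_left ha hL0
                  exact mul_le_mul_of_nonneg_right this (Real.rpow_nonneg dist_nonneg _)
              _ ≤ (δ / 4) * dist x y ^ α :=
                  mul_le_mul_of_nonneg_right hrle (Real.rpow_nonneg dist_nonneg _)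
          have hhd : h (dist x y) = δ' * dist x y ^ α + L * dist x y := by
            simp only [hhdef]
          calc |(F x - g x) - (F y - g y)| ≤ |F x - F y| + |g x - g y| := h1
            _ ≤ 2 * h (dist x y) := by linarith
            _ ≤ 2 * (δ' * dist x y ^ α + (δ / 4) * dist x y ^ α) := by
                rw [hhd]; linarith
            _ = δ * dist x y ^ α := by rw [hδ'def]; ring
        · -- large scale
          have h1 : |(F x - g x) - (F y - g y)| ≤ |g x - F x| + |g y - F y| := by
            have e : (F x - g x) - (F y - g y) = -((g x - F x)) + (g y - F y) := by ring
            rw [e]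
            exact (abs_add_le _ _).trans (by rw [abs_neg])
          have h2 : |g x - F x| + |g y - F y| ≤ 2 * c :=
            by linarith [hsup x, hsup y]
          have h3 : 2 * c ≤ δ * r ^ α := by
            have : c ≤ δ * r ^ α / 2 := min_le_right _ _
            linarith
          have h4 : δ * r ^ α ≤ δ * dist x y ^ α :=
            mul_le_mul_of_nonneg_left
              (Real.rpow_le_rpow hr0.le hlt.le hα0.le) hδ.le
          linarith
  · constructor
    · -- (iii) → (iv)
      intro h3 δ hδ
      obtain ⟨r0, hr0, H⟩ := h3 δ hδ
      refine ⟨r0, hr0, fun x hx y hy hd => ?_⟩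
      by_cases hxy : x = y
      · refine (habs0 x y hxy).trans ?_
        positivity
      · have hd0 : 0 < dist x y := dist_pos.2 hxy
        exact H (dist x y) hd0 hd x hx y hy le_rfl
    · -- (iv) → (iii)
      intro h4 δ hδ
      obtain ⟨r, hr, H⟩ := h4 δ hδ
      refine ⟨r, hr, fun r' hr'0 hr'r x hx y hy hd => ?_⟩
      calc |f x - f y| ≤ δ * dist x y ^ α := H x hx y hy (hd.trans hr'r)
        _ ≤ δ * r' ^ α :=
            mul_le_mul_of_nonneg_left (Real.rpow_le_rpow dist_nonneg hd hα0.le) hδ.le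
end
end
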